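/- arXiv:2110.03293 — 2 statements merged into one kernel-verified Lean document; each statement's English description precedes it below -/
import Mathlib

section
/- Let (b(p))_{p prime} be a sequence of complex numbers. Then uniformly for T ≥ 8, 2 ≤ y ≤ z ≤ T^{1/3}, and all integers k with 1 ≤ k ≤ (log T)/(3 log z), one has (1/T) ∫_T^{2T} | Σ_{y ≤ p ≤ z} b(p) p^{−it} |^{2k} dt ≪ ( k Σ_{y ≤ p ≤ z} |b(p)|² )^k + T^{−2/3} ( Σ_{y ≤ p ≤ z} |b(p)| )^{2k}, where all sums are over primes p and the implied constant is absolute. -/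
open MeasureTheory Real
open scoped Classical

/-- The modified Bessel-type function `I₀`. -/
noncomputable def I0 (t : ℝ) : ℝ := ∑' n : ℕ, (t / 2) ^ n / (Nat.factorial n : ℝ) ^ 2

/-- The constants `C_j`. -/
noncomputable def Cconst (j : ℕ) : ℝ :=
    (∫ t in (0:ℝ)..2, (Real.log (t / 2)) ^ j * Real.log (I0 t) / t ^ 2)
  + (∫ t in Set.Ioi (2 : ℝ), (Real.log (t / 2)) ^ j * (Real.log (I0 t) - t) / t ^ 2)

/-- The short Euler product `ζ(s; y)`. -/
noncomputable def zetaY (y : ℝ) (s : ℂ) : ℂ :=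
  ∏ p ∈ Finset.filter Nat.Prime (Finset.Iic ⌊y⌋₊), (1 - (p : ℂ) ^ (-s))⁻¹

/-- The distribution function `Φ_T(τ)`. -/
noncomputable def Phi (T τ : ℝ) : ℝ :=
  (volume {t : ℝ | t ∈ Set.Icc T (2 * T) ∧
    Real.exp Real.eulerMascheroniConstant * τ <
      ‖riemannZeta (1 + t * Complex.I)‖}).toReal / T

/-- The distribution function `Φ_T(τ; y)`. -/
noncomputable def PhiY (T τ y : ℝ) : ℝ :=
  (volume {t : ℝ | t ∈ Set.Icc T (2 * T) ∧
    Real.exp Real.eulerMascheroniConstant * τ <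
      ‖zetaY y (1 + t * Complex.I)‖}).toReal / T

/-- The `k`-th divisor function. -/
noncomputable def dk (k n : ℕ) : ℕ := Nat.card {f : Fin k → ℕ // ∏ i, f i = n}

/-- `D_k(y)`, the sum of `d_k(n)²/n²` over `y`-friable `n`. -/
noncomputable def Dky (k : ℕ) (y : ℝ) : ℝ :=
  ∑' n : ℕ,
    if 0 < n ∧ ∀ p ∈ n.primeFactors, (p : ℝ) ≤ y then (dk k n : ℝ) ^ 2 / (n : ℝ) ^ 2 else 0

/-- The finset of primes `p` with `y ≤ p ≤ z`. -/
noncomputable def primesBetween (y z : ℝ) : Finset ℕ :=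
  Finset.filter (fun p : ℕ => p.Prime ∧ y ≤ (p : ℝ)) (Finset.Iic ⌊z⌋₊)

set_option maxHeartbeats 1000000

private lemma log_ge_one_sub_inv' {x : ℝ} (hx : 0 < x) : 1 - 1/x ≤ Real.log x := by
  have h := Real.log_le_sub_one_of_pos (x := x⁻¹) (by positivity)
  rw [Real.log_inv] at h
  rw [one_div]; linarith

private lemma abs_integral_exp_le' {θ a bb : ℝ} (hθ : θ ≠ 0) :
    ‖∫ t : ℝ in a..bb, Complex.exp (Complex.I * (θ:ℂ) * (t:ℂ))‖ ≤ 2 / |θ| := by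
  have hc : (Complex.I * (θ:ℂ)) ≠ 0 := by simp [Complex.I_ne_zero, hθ]
  rw [show (∫ t : ℝ in a..bb, Complex.exp (Complex.I * (θ:ℂ) * (t:ℂ)))
      = ∫ t : ℝ in a..bb, Complex.exp ((Complex.I * (θ:ℂ)) * (t:ℂ)) from rfl,
    integral_exp_mul_complex hc, norm_div]
  have h1 : ∀ s : ℝ, ‖Complex.exp (Complex.I * (θ:ℂ) * (s:ℂ))‖ = 1 := by
    intro s; rw [Complex.norm_exp]; simp
  have h2 : ‖Complex.I * (θ:ℂ)‖ = |θ| := by simp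
  rw [h2]
  gcongr
  calc ‖Complex.exp (Complex.I * (θ:ℂ) * (bb:ℂ)) - Complex.exp (Complex.I * (θ:ℂ) * (a:ℂ))‖
      ≤ ‖Complex.exp (Complex.I * (θ:ℂ) * (bb:ℂ))‖
        + ‖Complex.exp (Complex.I * (θ:ℂ) * (a:ℂ))‖ := norm_sub_le _ _
    _ ≤ 2 := by rw [h1, h1]; norm_num

private lemma expand_abs_pow' (b : ℕ → ℂ) (P : Finset ℕ) (k : ℕ)
    (hPne : ∀ p ∈ P, p ≠ 0) (t : ℝ) :
    ((‖(∑ p ∈ P, b p * (p : ℂ) ^ (-(Complex.I * (t : ℂ))))‖ ^ (2*k) : ℝ) : ℂ)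
      = ∑ g ∈ Fintype.piFinset (fun _ : Fin k => P), ∑ h ∈ Fintype.piFinset (fun _ : Fin k => P),
          ((∏ j, b (g j)) * (starRingEnd ℂ) (∏ j, b (h j)))
          * Complex.exp (Complex.I * (((∑ j, Real.log (h j)) - ∑ j, Real.log (g j) : ℝ):ℂ) * (t:ℂ)) := by
  set S : ℂ := ∑ p ∈ P, b p * (p : ℂ) ^ (-(Complex.I * (t : ℂ))) with hSdef
  have hS : S = ∑ p ∈ P, b p * Complex.exp (-(Complex.I * (t:ℂ)) * ((Real.log p : ℝ):ℂ)) := by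
    refine Finset.sum_congr rfl fun p hp => ?_
    rw [Complex.cpow_def_of_ne_zero (by exact_mod_cast hPne p hp), ← Complex.natCast_log]
    ring_nf
  have hterm : ∀ g : Fin k → ℕ,
      (∏ j, (b (g j) * Complex.exp (-(Complex.I * (t:ℂ)) * ((Real.log (g j) : ℝ):ℂ))))
        = (∏ j, b (g j)) * Complex.exp (-(Complex.I * (t:ℂ)) * (((∑ j, Real.log (g j) : ℝ)):ℂ)) := by
    intro g
    rw [Finset.prod_mul_distrib, ← Complex.exp_sum, ← Finset.mul_sum]
    congr 2
    push_cast
    ring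
  have hSk : S ^ k = ∑ g ∈ Fintype.piFinset (fun _ : Fin k => P),
      (∏ j, b (g j)) * Complex.exp (-(Complex.I * (t:ℂ)) * (((∑ j, Real.log (g j) : ℝ)):ℂ)) := by
    rw [hS, Finset.sum_pow']
    exact Finset.sum_congr rfl fun g _ => hterm g
  have hSkc : (starRingEnd ℂ) (S ^ k) = ∑ h ∈ Fintype.piFinset (fun _ : Fin k => P),
      (starRingEnd ℂ) (∏ j, b (h j))
        * Complex.exp ((Complex.I * (t:ℂ)) * (((∑ j, Real.log (h j) : ℝ)):ℂ)) := by
    rw [hSk, map_sum]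
    refine Finset.sum_congr rfl fun h _ => ?_
    rw [map_mul, ← Complex.exp_conj]
    congr 1
    simp only [map_mul, map_neg, Complex.conj_I, Complex.conj_ofReal]
    ring
  have habs : ((‖S‖ ^ (2*k) : ℝ) : ℂ) = S ^ k * (starRingEnd ℂ) (S ^ k) := by
    rw [Complex.mul_conj, Complex.normSq_eq_norm_sq, norm_pow, ← pow_mul, mul_comm k 2]
  rw [habs, hSkc, hSk, Finset.sum_mul_sum]
  refine Finset.sum_congr rfl fun g _ => Finset.sum_congr rfl fun h _ => ?_
  rw [mul_mul_mul_comm, ← Complex.exp_add]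
  congr 1
  push_cast
  ring

private lemma integral_expand' (k : ℕ) (P : Finset ℕ) (T : ℝ)
    (Bc : (Fin k → ℕ) → ℂ) (L : (Fin k → ℕ) → ℝ) (F : ℝ → ℝ)
    (hexp : ∀ t : ℝ, ((F t : ℝ) : ℂ)
      = ∑ g ∈ Fintype.piFinset (fun _ : Fin k => P), ∑ h ∈ Fintype.piFinset (fun _ : Fin k => P),
          (Bc g * (starRingEnd ℂ) (Bc h)) * Complex.exp (Complex.I * ((L h - L g : ℝ):ℂ) * (t:ℂ))) :
    (∫ t in T..(2*T), F t)
      = (∑ g ∈ Fintype.piFinset (fun _ : Fin k => P), ∑ h ∈ Fintype.piFinset (fun _ : Fin k => P),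
          (Bc g * (starRingEnd ℂ) (Bc h)) *
            ∫ t in T..(2*T), Complex.exp (Complex.I * ((L h - L g : ℝ):ℂ) * (t:ℂ))).re := by
  have hcont : ∀ (g h : Fin k → ℕ), Continuous fun t : ℝ =>
      (Bc g * (starRingEnd ℂ) (Bc h)) * Complex.exp (Complex.I * ((L h - L g : ℝ):ℂ) * (t:ℂ)) := by
    intro g h
    exact continuous_const.mul (Complex.continuous_exp.comp
      (continuous_const.mul Complex.continuous_ofReal))
  have step1 : ((∫ t in T..(2*T), F t : ℝ) : ℂ)
      = ∫ t in T..(2*T), (∑ g ∈ Fintype.piFinset (fun _ : Fin k => P),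
          ∑ h ∈ Fintype.piFinset (fun _ : Fin k => P),
          (Bc g * (starRingEnd ℂ) (Bc h)) * Complex.exp (Complex.I * ((L h - L g : ℝ):ℂ) * (t:ℂ))) := by
    rw [← intervalIntegral.integral_ofReal]
    exact intervalIntegral.integral_congr (fun t _ => hexp t)
  have step2 : (∫ t in T..(2*T), (∑ g ∈ Fintype.piFinset (fun _ : Fin k => P),
          ∑ h ∈ Fintype.piFinset (fun _ : Fin k => P),
          (Bc g * (starRingEnd ℂ) (Bc h)) * Complex.exp (Complex.I * ((L h - L g : ℝ):ℂ) * (t:ℂ))))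
      = ∑ g ∈ Fintype.piFinset (fun _ : Fin k => P), ∫ t in T..(2*T),
          (∑ h ∈ Fintype.piFinset (fun _ : Fin k => P),
          (Bc g * (starRingEnd ℂ) (Bc h)) * Complex.exp (Complex.I * ((L h - L g : ℝ):ℂ) * (t:ℂ))) :=
    intervalIntegral.integral_finset_sum (fun g _ =>
      ((continuous_finset_sum _ (fun h _ => hcont g h)).intervalIntegrable _ _))
  have step3 : ∀ g : Fin k → ℕ, (∫ t in T..(2*T),
          (∑ h ∈ Fintype.piFinset (fun _ : Fin k => P),
          (Bc g * (starRingEnd ℂ) (Bc h)) * Complex.exp (Complex.I * ((L h - L g : ℝ):ℂ) * (t:ℂ))))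
      = ∑ h ∈ Fintype.piFinset (fun _ : Fin k => P), (Bc g * (starRingEnd ℂ) (Bc h)) *
          ∫ t in T..(2*T), Complex.exp (Complex.I * ((L h - L g : ℝ):ℂ) * (t:ℂ)) := by
    intro g
    rw [intervalIntegral.integral_finset_sum (fun h _ => ((hcont g h).intervalIntegrable _ _))]
    exact Finset.sum_congr rfl fun h _ => intervalIntegral.integral_const_mul _ _
  have h1 := step1.trans (step2.trans (Finset.sum_congr rfl (fun g _ => step3 g)))
  calc (∫ t in T..(2*T), F t) = (((∫ t in T..(2*T), F t : ℝ) : ℂ)).re := (Complex.ofReal_re _).symm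
    _ = _ := by rw [h1]

private lemma abs_integral_diag' {T : ℝ} (hT0 : 0 < T) {θ : ℝ} (hθ : θ = 0) :
    ‖∫ t : ℝ in T..(2*T), Complex.exp (Complex.I * (θ:ℂ) * (t:ℂ))‖ = T := by
  subst hθ
  simp only [Complex.ofReal_zero, mul_zero, zero_mul, Complex.exp_zero]
  rw [intervalIntegral.integral_const, Complex.real_smul, mul_one, Complex.norm_real, Real.norm_eq_abs,
    show (2*T - T) = T by ring, abs_of_pos hT0]

private lemma log_gap' (zk : ℝ) (n m : ℕ) (hn : 1 ≤ n) (hnm : n < m)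
    (hmz : (m:ℝ) ≤ zk) : zk⁻¹ ≤ Real.log m - Real.log n := by
  have hn0 : (0:ℝ) < n := by exact_mod_cast hn
  have hm0 : (0:ℝ) < m := by exact_mod_cast Nat.lt_of_lt_of_le hn hnm.le
  have h1 : Real.log ((m:ℝ)/n) = Real.log m - Real.log n := Real.log_div hm0.ne' hn0.ne'
  have h2 : 1 - (n:ℝ)/m ≤ Real.log ((m:ℝ)/n) := by
    have h := log_ge_one_sub_inv' (x := (m:ℝ)/n) (by positivity)
    have e : 1/((m:ℝ)/n) = (n:ℝ)/m := by field_simp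
    rw [e] at h; exact h
  have h3 : (1:ℝ) ≤ (m:ℝ) - n := by
    have : (n:ℝ) + 1 ≤ m := by exact_mod_cast hnm
    linarith
  have h4 : zk⁻¹ ≤ 1 - (n:ℝ)/m := by
    have e : 1 - (n:ℝ)/m = ((m:ℝ) - n)/m := by field_simp
    have h5 : (1:ℝ)/m ≤ ((m:ℝ)-n)/m := by gcongr
    have h6 : zk⁻¹ ≤ (m:ℝ)⁻¹ := inv_anti₀ hm0 hmz
    rw [e]
    rw [one_div] at h5
    linarith
  linarith

private lemma zk_le' (T z : ℝ) (k : ℕ) (hT0 : 0 < T) (hz2 : 2 ≤ z)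
    (hkz : (k : ℝ) ≤ Real.log T / (3 * Real.log z)) : z ^ k ≤ T ^ ((1:ℝ)/3) := by
  have hz0 : (0:ℝ) < z := by linarith
  have hlogz : 0 < Real.log z := Real.log_pos (by linarith)
  have h1 : (k:ℝ) * Real.log z ≤ Real.log T / 3 := by
    have := (le_div_iff₀ (by positivity)).mp hkz
    linarith
  have h2 : z ^ k = Real.exp (Real.log z * (k:ℝ)) := by
    rw [← Real.rpow_natCast z k, Real.rpow_def_of_pos hz0]
  have h3 : T ^ ((1:ℝ)/3) = Real.exp (Real.log T * (1/3)) := by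
    rw [Real.rpow_def_of_pos hT0]
  rw [h2, h3]
  refine Real.exp_le_exp.mpr ?_
  nlinarith

private lemma card_diag_le' (k : ℕ) (P : Finset ℕ)
    (hPprime : ∀ p ∈ P, Nat.Prime p) (g : Fin k → ℕ)
    (hg : g ∈ Fintype.piFinset (fun _ : Fin k => P)) :
    (((Fintype.piFinset (fun _ : Fin k => P)).filter
        (fun h => (∏ j, h j) = ∏ j, g j)).card : ℝ) ≤ (k:ℝ)^k := by
  have hsub : (Fintype.piFinset (fun _ : Fin k => P)).filter (fun h => (∏ j, h j) = ∏ j, g j)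
      ⊆ Fintype.piFinset (fun _ : Fin k => Finset.image g Finset.univ) := by
    intro h hh
    rw [Finset.mem_filter] at hh
    rw [Fintype.mem_piFinset]
    intro j
    have hgP : ∀ i, g i ∈ P := fun i => (Fintype.mem_piFinset.mp hg) i
    have hhP : ∀ i, h i ∈ P := fun i => (Fintype.mem_piFinset.mp hh.1) i
    have hhj : (h j).Prime := hPprime _ (hhP j)
    have hdvd : h j ∣ ∏ i, g i := hh.2 ▸ Finset.dvd_prod_of_mem h (Finset.mem_univ j)
    obtain ⟨i, _, hdvd'⟩ := (Nat.Prime.prime hhj).exists_mem_finset_dvd hdvd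
    rw [Finset.mem_image]
    exact ⟨i, Finset.mem_univ i,
      ((Nat.prime_dvd_prime_iff_eq hhj (hPprime _ (hgP i))).mp hdvd').symm⟩
  calc (((Fintype.piFinset (fun _ : Fin k => P)).filter
        (fun h => (∏ j, h j) = ∏ j, g j)).card : ℝ)
      ≤ ((Fintype.piFinset (fun _ : Fin k => Finset.image g Finset.univ)).card : ℝ) := by
        exact_mod_cast Finset.card_le_card hsub
    _ = ((Finset.image g Finset.univ).card : ℝ)^k := by
        rw [Fintype.card_piFinset_const]; push_cast; ring
    _ ≤ (k:ℝ)^k := by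
        have : (Finset.image g Finset.univ).card ≤ k := le_trans (Finset.card_image_le)
          (by simp)
        gcongr


/-- **Lemma 2.2.** For a complex sequence `(b(p))`, uniformly for `T ≥ 8`,
`2 ≤ y ≤ z ≤ T^{1/3}` and integers `1 ≤ k ≤ log T/(3 log z)`,
`(1/T)∫_T^{2T} |Σ_{y≤p≤z} b(p)p^{−it}|^{2k} dt
 ≪ (k Σ |b(p)|²)^k + T^{−2/3}(Σ |b(p)|)^{2k}` with an absolute implied constant. -/
theorem prime_dirichlet_polynomial_moment :
    ∃ C : ℝ, 0 < C ∧ ∀ b : ℕ → ℂ, ∀ T y z : ℝ, 8 ≤ T → 2 ≤ y → y ≤ z →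
      z ≤ T ^ ((1 : ℝ) / 3) → ∀ k : ℕ, 1 ≤ k → (k : ℝ) ≤ Real.log T / (3 * Real.log z) →
      (1 / T) * ∫ t in T..(2 * T),
          ‖∑ p ∈ primesBetween y z,
            b p * (p : ℂ) ^ (-(Complex.I * (t : ℂ)))‖ ^ (2 * k)
        ≤ C * (((k : ℝ) * ∑ p ∈ primesBetween y z, ‖b p‖ ^ 2) ^ k
          + (1 / T ^ ((2 : ℝ) / 3)) *
              (∑ p ∈ primesBetween y z, ‖b p‖) ^ (2 * k)) := by
  refine ⟨2, two_pos, ?_⟩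
  intro b T y z hT h2y hyz hzT k hk1 hkz
  set P := primesBetween y z with hPdef
  set X : ℝ := ∑ p ∈ P, ‖b p‖ ^ 2 with hXdef
  set Y : ℝ := ∑ p ∈ P, ‖b p‖ with hYdef
  have hT0 : (0:ℝ) < T := by linarith
  have hz2 : (2:ℝ) ≤ z := le_trans h2y hyz
  have hz0 : (0:ℝ) < z := by linarith
  have hT13 : (0:ℝ) < T ^ ((1:ℝ)/3) := Real.rpow_pos_of_pos hT0 _
  have hT23 : (0:ℝ) < T ^ ((2:ℝ)/3) := Real.rpow_pos_of_pos hT0 _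
  have hzk0 : (0:ℝ) < z ^ k := by positivity
  -- facts about members of P
  have hPprime : ∀ p ∈ P, Nat.Prime p := by
    intro p hp
    simp only [hPdef, primesBetween, Finset.mem_filter] at hp
    exact hp.2.1
  have hPz : ∀ p ∈ P, (p:ℝ) ≤ z := by
    intro p hp
    simp only [hPdef, primesBetween, Finset.mem_filter, Finset.mem_Iic] at hp
    exact le_trans (by exact_mod_cast hp.1) (Nat.floor_le hz0.le)
  have hPne : ∀ p ∈ P, p ≠ 0 := fun p hp => (hPprime p hp).pos.ne'
  -- facts about tuples
  have hN1 : ∀ g ∈ Fintype.piFinset (fun _ : Fin k => P), 1 ≤ ∏ j, g j := by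
    intro g hg
    exact Finset.prod_pos fun j _ => (hPprime _ ((Fintype.mem_piFinset.mp hg) j)).pos
  have hNz : ∀ g ∈ Fintype.piFinset (fun _ : Fin k => P), ((∏ j, g j : ℕ) : ℝ) ≤ z ^ k := by
    intro g hg
    push_cast
    calc ∏ j, ((g j : ℝ)) ≤ ∏ _j : Fin k, z :=
          Finset.prod_le_prod (fun j _ => by positivity)
            (fun j _ => hPz _ ((Fintype.mem_piFinset.mp hg) j))
      _ = z ^ k := by simp
  have hLlog : ∀ g ∈ Fintype.piFinset (fun _ : Fin k => P),
      (∑ j, Real.log (g j)) = Real.log ((∏ j, g j : ℕ) : ℝ) := by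
    intro g hg
    rw [Nat.cast_prod, Real.log_prod]
    intro j _
    exact_mod_cast (hPprime _ ((Fintype.mem_piFinset.mp hg) j)).pos.ne'
  have hzkT : z ^ k ≤ T ^ ((1:ℝ)/3) := zk_le' T z k hT0 hz2 hkz
  -- the E-factor bounds
  have hEdiag : ∀ g ∈ Fintype.piFinset (fun _ : Fin k => P),
      ∀ h ∈ Fintype.piFinset (fun _ : Fin k => P), (∏ j, h j) = (∏ j, g j) →
      ‖∫ t : ℝ in T..(2*T),
        Complex.exp (Complex.I * ((((∑ j, Real.log (h j)) - ∑ j, Real.log (g j)) : ℝ):ℂ) * (t:ℂ))‖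
        = T := by
    intro g hg h hh hN
    exact abs_integral_diag' hT0 (by rw [hLlog g hg, hLlog h hh, hN, sub_self])
  have hEoff : ∀ g ∈ Fintype.piFinset (fun _ : Fin k => P),
      ∀ h ∈ Fintype.piFinset (fun _ : Fin k => P), (∏ j, h j) ≠ (∏ j, g j) →
      ‖∫ t : ℝ in T..(2*T),
        Complex.exp (Complex.I * ((((∑ j, Real.log (h j)) - ∑ j, Real.log (g j)) : ℝ):ℂ) * (t:ℂ))‖
        ≤ 2 * T ^ ((1:ℝ)/3) := by
    intro g hg h hh hN
    have habs : (z^k)⁻¹ ≤ |(∑ j, Real.log (h j)) - ∑ j, Real.log (g j)| := by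
      rw [hLlog g hg, hLlog h hh]
      rcases Ne.lt_or_gt hN with hlt | hlt
      · have := log_gap' (z^k) (∏ j, h j) (∏ j, g j) (hN1 h hh) hlt (hNz g hg)
        calc (z^k)⁻¹ ≤ Real.log ((∏ j, g j : ℕ):ℝ) - Real.log ((∏ j, h j : ℕ):ℝ) := this
          _ = -(Real.log ((∏ j, h j : ℕ):ℝ) - Real.log ((∏ j, g j : ℕ):ℝ)) := by ring
          _ ≤ |Real.log ((∏ j, h j : ℕ):ℝ) - Real.log ((∏ j, g j : ℕ):ℝ)| := by
              rw [← abs_neg]; exact le_abs_self _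
      · have := log_gap' (z^k) (∏ j, g j) (∏ j, h j) (hN1 g hg) hlt (hNz h hh)
        exact le_trans this (le_abs_self _)
    have hne : (∑ j, Real.log (h j)) - ∑ j, Real.log (g j) ≠ 0 := by
      intro h0
      rw [h0, abs_zero] at habs
      exact absurd (lt_of_lt_of_le (by positivity) habs) (lt_irrefl 0)
    calc ‖∫ t : ℝ in T..(2*T),
        Complex.exp (Complex.I * ((((∑ j, Real.log (h j)) - ∑ j, Real.log (g j)) : ℝ):ℂ) * (t:ℂ))‖
        ≤ 2 / |(∑ j, Real.log (h j)) - ∑ j, Real.log (g j)| := abs_integral_exp_le' hne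
      _ ≤ 2 / (z^k)⁻¹ := by
          apply div_le_div_of_nonneg_left (by norm_num) (by positivity) habs
      _ = 2 * z^k := by field_simp
      _ ≤ 2 * T ^ ((1:ℝ)/3) := by linarith
  -- nonnegativity of W
  have hWnn : ∀ g : Fin k → ℕ, 0 ≤ ∏ j, ‖b (g j)‖ :=
    fun g => Finset.prod_nonneg fun j _ => norm_nonneg _
  -- diagonal combinatorial bound
  have hDiag : ∑ g ∈ Fintype.piFinset (fun _ : Fin k => P),
      ∑ h ∈ (Fintype.piFinset (fun _ : Fin k => P)).filter (fun h => (∏ j, h j) = ∏ j, g j),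
        (∏ j, ‖b (g j)‖) * (∏ j, ‖b (h j)‖)
      ≤ (k:ℝ)^k * X^k := by
    have hD1 : ∑ g ∈ Fintype.piFinset (fun _ : Fin k => P),
        ∑ h ∈ (Fintype.piFinset (fun _ : Fin k => P)).filter (fun h => (∏ j, h j) = ∏ j, g j),
          (∏ j, ‖b (g j)‖)^2 ≤ (k:ℝ)^k * X^k := by
      have e1 : ∀ g ∈ Fintype.piFinset (fun _ : Fin k => P),
          ∑ h ∈ (Fintype.piFinset (fun _ : Fin k => P)).filter (fun h => (∏ j, h j) = ∏ j, g j),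
            (∏ j, ‖b (g j)‖)^2
          = (((Fintype.piFinset (fun _ : Fin k => P)).filter
              (fun h => (∏ j, h j) = ∏ j, g j)).card : ℝ) * (∏ j, ‖b (g j)‖)^2 := by
        intro g _
        rw [Finset.sum_const, nsmul_eq_mul]
      rw [Finset.sum_congr rfl e1]
      have e2 : ∑ g ∈ Fintype.piFinset (fun _ : Fin k => P),
          (((Fintype.piFinset (fun _ : Fin k => P)).filter
              (fun h => (∏ j, h j) = ∏ j, g j)).card : ℝ) * (∏ j, ‖b (g j)‖)^2
          ≤ ∑ g ∈ Fintype.piFinset (fun _ : Fin k => P),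
            (k:ℝ)^k * (∏ j, ‖b (g j)‖)^2 := by
        refine Finset.sum_le_sum fun g hg => ?_
        exact mul_le_mul_of_nonneg_right (card_diag_le' k P hPprime g hg) (by positivity)
      refine le_trans e2 ?_
      rw [← Finset.mul_sum]
      have e3 : ∑ g ∈ Fintype.piFinset (fun _ : Fin k => P), (∏ j, ‖b (g j)‖)^2
          = X^k := by
        rw [hXdef, Finset.sum_pow']
        exact Finset.sum_congr rfl fun g _ => (Finset.prod_pow _ _ _).symm
      rw [e3]
    -- symmetry: sum of W h ^ 2 equals sum of W g ^ 2
    have hsymm : ∑ g ∈ Fintype.piFinset (fun _ : Fin k => P),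
        ∑ h ∈ (Fintype.piFinset (fun _ : Fin k => P)).filter (fun h => (∏ j, h j) = ∏ j, g j),
          (∏ j, ‖b (h j)‖)^2
        = ∑ g ∈ Fintype.piFinset (fun _ : Fin k => P),
        ∑ h ∈ (Fintype.piFinset (fun _ : Fin k => P)).filter (fun h => (∏ j, h j) = ∏ j, g j),
          (∏ j, ‖b (g j)‖)^2 := by
      refine Finset.sum_comm' ?_
      intro g h
      simp only [Finset.mem_filter]
      constructor
      · rintro ⟨h1, h2, h3⟩; exact ⟨⟨h1, h3.symm⟩, h2⟩
      · rintro ⟨⟨h1, h3⟩, h2⟩; exact ⟨h1, h2, h3.symm⟩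
    have h2ab : 2 * (∑ g ∈ Fintype.piFinset (fun _ : Fin k => P),
        ∑ h ∈ (Fintype.piFinset (fun _ : Fin k => P)).filter (fun h => (∏ j, h j) = ∏ j, g j),
          (∏ j, ‖b (g j)‖) * (∏ j, ‖b (h j)‖))
        ≤ 2 * (∑ g ∈ Fintype.piFinset (fun _ : Fin k => P),
            ∑ h ∈ (Fintype.piFinset (fun _ : Fin k => P)).filter (fun h => (∏ j, h j) = ∏ j, g j),
              (∏ j, ‖b (g j)‖)^2) := by
      calc 2 * (∑ g ∈ Fintype.piFinset (fun _ : Fin k => P),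
          ∑ h ∈ (Fintype.piFinset (fun _ : Fin k => P)).filter (fun h => (∏ j, h j) = ∏ j, g j),
            (∏ j, ‖b (g j)‖) * (∏ j, ‖b (h j)‖))
          = ∑ g ∈ Fintype.piFinset (fun _ : Fin k => P),
            ∑ h ∈ (Fintype.piFinset (fun _ : Fin k => P)).filter (fun h => (∏ j, h j) = ∏ j, g j),
              2 * ((∏ j, ‖b (g j)‖) * (∏ j, ‖b (h j)‖)) := by
            rw [Finset.mul_sum]
            exact Finset.sum_congr rfl fun g _ => Finset.mul_sum _ _ _
        _ ≤ ∑ g ∈ Fintype.piFinset (fun _ : Fin k => P),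
            ∑ h ∈ (Fintype.piFinset (fun _ : Fin k => P)).filter (fun h => (∏ j, h j) = ∏ j, g j),
              ((∏ j, ‖b (g j)‖)^2 + (∏ j, ‖b (h j)‖)^2) := by
            refine Finset.sum_le_sum fun g _ => Finset.sum_le_sum fun h _ => ?_
            rw [← mul_assoc]
            exact two_mul_le_add_sq _ _
        _ = (∑ g ∈ Fintype.piFinset (fun _ : Fin k => P),
            ∑ h ∈ (Fintype.piFinset (fun _ : Fin k => P)).filter (fun h => (∏ j, h j) = ∏ j, g j),
              (∏ j, ‖b (g j)‖)^2)
          + ∑ g ∈ Fintype.piFinset (fun _ : Fin k => P),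
            ∑ h ∈ (Fintype.piFinset (fun _ : Fin k => P)).filter (fun h => (∏ j, h j) = ∏ j, g j),
              (∏ j, ‖b (h j)‖)^2 := by
            rw [← Finset.sum_add_distrib]
            exact Finset.sum_congr rfl fun g _ => Finset.sum_add_distrib
        _ = 2 * (∑ g ∈ Fintype.piFinset (fun _ : Fin k => P),
            ∑ h ∈ (Fintype.piFinset (fun _ : Fin k => P)).filter (fun h => (∏ j, h j) = ∏ j, g j),
              (∏ j, ‖b (g j)‖)^2) := by
            rw [hsymm]; ring
    linarith
  -- sum identity for Y
  have hYsum : ∑ g ∈ Fintype.piFinset (fun _ : Fin k => P), ∏ j, ‖b (g j)‖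
      = Y ^ k := (Finset.sum_pow' P (fun p => ‖b p‖) k).symm
  -- the key integral bound
  have key : (∫ t in T..(2*T),
      ‖∑ p ∈ P, b p * (p : ℂ) ^ (-(Complex.I * (t : ℂ)))‖ ^ (2*k))
      ≤ T * ((k:ℝ)^k * X^k) + 2 * T ^ ((1:ℝ)/3) * Y^(2*k) := by
    have hIntExp := integral_expand' k P T (fun g => ∏ j, b (g j))
      (fun g => ∑ j, Real.log (g j))
      (fun t => ‖∑ p ∈ P, b p * (p : ℂ) ^ (-(Complex.I * (t : ℂ)))‖ ^ (2*k))
      (fun t => expand_abs_pow' b P k hPne t)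
    calc (∫ t in T..(2*T),
        ‖∑ p ∈ P, b p * (p : ℂ) ^ (-(Complex.I * (t : ℂ)))‖ ^ (2*k))
        = (∑ g ∈ Fintype.piFinset (fun _ : Fin k => P),
            ∑ h ∈ Fintype.piFinset (fun _ : Fin k => P),
            ((∏ j, b (g j)) * (starRingEnd ℂ) (∏ j, b (h j))) *
              ∫ t : ℝ in T..(2*T), Complex.exp (Complex.I *
                ((((∑ j, Real.log (h j)) - ∑ j, Real.log (g j)) : ℝ):ℂ) * (t:ℂ))).re := hIntExp
      _ ≤ ‖∑ g ∈ Fintype.piFinset (fun _ : Fin k => P),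
            ∑ h ∈ Fintype.piFinset (fun _ : Fin k => P),
            ((∏ j, b (g j)) * (starRingEnd ℂ) (∏ j, b (h j))) *
              ∫ t : ℝ in T..(2*T), Complex.exp (Complex.I *
                ((((∑ j, Real.log (h j)) - ∑ j, Real.log (g j)) : ℝ):ℂ) * (t:ℂ))‖ :=
          Complex.re_le_norm _
      _ ≤ ∑ g ∈ Fintype.piFinset (fun _ : Fin k => P),
            ∑ h ∈ Fintype.piFinset (fun _ : Fin k => P),
            ((∏ j, ‖b (g j)‖) * (∏ j, ‖b (h j)‖)) *
              ‖∫ t : ℝ in T..(2*T), Complex.exp (Complex.I *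
                ((((∑ j, Real.log (h j)) - ∑ j, Real.log (g j)) : ℝ):ℂ) * (t:ℂ))‖ := by
          refine le_trans (norm_sum_le _ _) (Finset.sum_le_sum fun g _ => ?_)
          refine le_trans (norm_sum_le _ _) (Finset.sum_le_sum fun h _ => ?_)
          rw [norm_mul, norm_mul, Complex.norm_conj, norm_prod, norm_prod]
      _ = (∑ g ∈ Fintype.piFinset (fun _ : Fin k => P),
            ∑ h ∈ (Fintype.piFinset (fun _ : Fin k => P)).filter
                (fun h => (∏ j, h j) = ∏ j, g j),
            ((∏ j, ‖b (g j)‖) * (∏ j, ‖b (h j)‖)) *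
              ‖∫ t : ℝ in T..(2*T), Complex.exp (Complex.I *
                ((((∑ j, Real.log (h j)) - ∑ j, Real.log (g j)) : ℝ):ℂ) * (t:ℂ))‖)
          + ∑ g ∈ Fintype.piFinset (fun _ : Fin k => P),
            ∑ h ∈ (Fintype.piFinset (fun _ : Fin k => P)).filter
                (fun h => ¬((∏ j, h j) = ∏ j, g j)),
            ((∏ j, ‖b (g j)‖) * (∏ j, ‖b (h j)‖)) *
              ‖∫ t : ℝ in T..(2*T), Complex.exp (Complex.I *
                ((((∑ j, Real.log (h j)) - ∑ j, Real.log (g j)) : ℝ):ℂ) * (t:ℂ))‖ := by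
          rw [← Finset.sum_add_distrib]
          exact Finset.sum_congr rfl fun g _ =>
            (Finset.sum_filter_add_sum_filter_not _ _ _).symm
      _ ≤ T * ((k:ℝ)^k * X^k) + 2 * T ^ ((1:ℝ)/3) * Y^(2*k) := by
          refine add_le_add ?_ ?_
          · -- diagonal part
            have e1 : ∀ g ∈ Fintype.piFinset (fun _ : Fin k => P),
                ∑ h ∈ (Fintype.piFinset (fun _ : Fin k => P)).filter
                    (fun h => (∏ j, h j) = ∏ j, g j),
                  ((∏ j, ‖b (g j)‖) * (∏ j, ‖b (h j)‖)) *
                    ‖∫ t : ℝ in T..(2*T), Complex.exp (Complex.I *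
                      ((((∑ j, Real.log (h j)) - ∑ j, Real.log (g j)) : ℝ):ℂ) * (t:ℂ))‖
                = ∑ h ∈ (Fintype.piFinset (fun _ : Fin k => P)).filter
                    (fun h => (∏ j, h j) = ∏ j, g j),
                  ((∏ j, ‖b (g j)‖) * (∏ j, ‖b (h j)‖)) * T := by
              intro g hg
              refine Finset.sum_congr rfl fun h hh => ?_
              rw [Finset.mem_filter] at hh
              rw [hEdiag g hg h hh.1 hh.2]
            rw [Finset.sum_congr rfl e1]
            calc ∑ g ∈ Fintype.piFinset (fun _ : Fin k => P),
                ∑ h ∈ (Fintype.piFinset (fun _ : Fin k => P)).filter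
                    (fun h => (∏ j, h j) = ∏ j, g j),
                  ((∏ j, ‖b (g j)‖) * (∏ j, ‖b (h j)‖)) * T
                = (∑ g ∈ Fintype.piFinset (fun _ : Fin k => P),
                  ∑ h ∈ (Fintype.piFinset (fun _ : Fin k => P)).filter
                      (fun h => (∏ j, h j) = ∏ j, g j),
                    (∏ j, ‖b (g j)‖) * (∏ j, ‖b (h j)‖)) * T := by
                  rw [Finset.sum_mul]
                  exact Finset.sum_congr rfl fun g _ => (Finset.sum_mul _ _ _).symm
              _ ≤ ((k:ℝ)^k * X^k) * T := by
                  exact mul_le_mul_of_nonneg_right hDiag hT0.le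
              _ = T * ((k:ℝ)^k * X^k) := by ring
          · -- off-diagonal part
            calc ∑ g ∈ Fintype.piFinset (fun _ : Fin k => P),
                ∑ h ∈ (Fintype.piFinset (fun _ : Fin k => P)).filter
                    (fun h => ¬((∏ j, h j) = ∏ j, g j)),
                  ((∏ j, ‖b (g j)‖) * (∏ j, ‖b (h j)‖)) *
                    ‖∫ t : ℝ in T..(2*T), Complex.exp (Complex.I *
                      ((((∑ j, Real.log (h j)) - ∑ j, Real.log (g j)) : ℝ):ℂ) * (t:ℂ))‖
                ≤ ∑ g ∈ Fintype.piFinset (fun _ : Fin k => P),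
                  ∑ h ∈ (Fintype.piFinset (fun _ : Fin k => P)).filter
                      (fun h => ¬((∏ j, h j) = ∏ j, g j)),
                    ((∏ j, ‖b (g j)‖) * (∏ j, ‖b (h j)‖)) *
                      (2 * T ^ ((1:ℝ)/3)) := by
                  refine Finset.sum_le_sum fun g hg => Finset.sum_le_sum fun h hh => ?_
                  rw [Finset.mem_filter] at hh
                  exact mul_le_mul_of_nonneg_left (hEoff g hg h hh.1 hh.2)
                    (mul_nonneg (hWnn g) (hWnn h))
              _ ≤ ∑ g ∈ Fintype.piFinset (fun _ : Fin k => P),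
                  ∑ h ∈ Fintype.piFinset (fun _ : Fin k => P),
                    ((∏ j, ‖b (g j)‖) * (∏ j, ‖b (h j)‖)) *
                      (2 * T ^ ((1:ℝ)/3)) := by
                  refine Finset.sum_le_sum fun g _ => ?_
                  refine Finset.sum_le_sum_of_subset_of_nonneg (Finset.filter_subset _ _) ?_
                  intro h _ _
                  exact mul_nonneg (mul_nonneg (hWnn g) (hWnn h)) (by positivity)
              _ = 2 * T ^ ((1:ℝ)/3) * Y^(2*k) := by
                  have e2 : ∑ g ∈ Fintype.piFinset (fun _ : Fin k => P),
                      ∑ h ∈ Fintype.piFinset (fun _ : Fin k => P),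
                        ((∏ j, ‖b (g j)‖) * (∏ j, ‖b (h j)‖)) *
                          (2 * T ^ ((1:ℝ)/3))
                      = (∑ g ∈ Fintype.piFinset (fun _ : Fin k => P),
                          ∏ j, ‖b (g j)‖)
                        * (∑ h ∈ Fintype.piFinset (fun _ : Fin k => P),
                          ∏ j, ‖b (h j)‖) * (2 * T ^ ((1:ℝ)/3)) := by
                    rw [Finset.sum_mul_sum, Finset.sum_mul]
                    refine Finset.sum_congr rfl fun g _ => ?_
                    rw [Finset.sum_mul]
                  rw [e2, hYsum, ← pow_add]
                  rw [show k + k = 2*k by ring]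
                  ring
  -- final arithmetic
  have hTT : T ^ ((1:ℝ)/3) / T = 1 / T^((2:ℝ)/3) := by
    rw [div_eq_div_iff hT0.ne' hT23.ne', ← Real.rpow_add hT0, one_mul]
    norm_num
  calc (1 / T) * ∫ t in T..(2 * T),
        ‖∑ p ∈ P, b p * (p : ℂ) ^ (-(Complex.I * (t : ℂ)))‖ ^ (2 * k)
      ≤ (1 / T) * (T * ((k:ℝ)^k * X^k) + 2 * T ^ ((1:ℝ)/3) * Y^(2*k)) := by
        apply mul_le_mul_of_nonneg_left key (by positivity)
    _ = (k:ℝ)^k * X^k + 2 * (T ^ ((1:ℝ)/3) / T) * Y^(2*k) := by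
        field_simp
    _ = (k:ℝ)^k * X^k + 2 * (1 / T^((2:ℝ)/3)) * Y^(2*k) := by rw [hTT]
    _ ≤ 2 * (((k:ℝ) * X)^k + (1 / T^((2:ℝ)/3)) * Y^(2*k)) := by
        rw [mul_pow]
        have h1 : 0 ≤ (k:ℝ)^k * X^k := by positivity
        have h2 : 0 ≤ (1 / T^((2:ℝ)/3)) * Y^(2*k) := by positivity
        nlinarith
end

section
/- Let A > 0. Then uniformly for T ≥ T_0(A) and e²·log T ≤ y ≤ (log T)(log₂T)^A, one has ∫_0^∞ Φ_T(u; y) du ≪_A 1. -/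
open MeasureTheory Real
open scoped Classical

lemma log_gap {m n : ℕ} (hm : 1 ≤ m) (hmn : m < n) :
    ((n:ℝ) - m)/n ≤ Real.log n - Real.log m := by
  have hm0 : (0:ℝ) < m := by exact_mod_cast hm
  have hn0 : (0:ℝ) < n := by exact_mod_cast Nat.lt_of_lt_of_le Nat.zero_lt_one (hm.trans hmn.le)
  have h := Real.log_le_sub_one_of_pos (show (0:ℝ) < (m:ℝ)/n by positivity)
  rw [Real.log_div (ne_of_gt hm0) (ne_of_gt hn0)] at h
  have : (m:ℝ)/n - 1 = -(((n:ℝ) - m)/n) := by field_simp; ring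
  linarith [this ▸ h]

lemma int_cos_bound {c : ℝ} (hc : c ≠ 0) (T : ℝ) :
    |∫ t in T..(2*T), Real.cos (c*t)| ≤ 2/|c| := by
  rw [intervalIntegral.integral_comp_mul_left Real.cos hc, integral_cos]
  rw [smul_eq_mul, abs_mul, abs_inv]
  rw [div_eq_inv_mul]
  gcongr
  calc |Real.sin (c*(2*T)) - Real.sin (c*T)| ≤ |Real.sin (c*(2*T))| + |Real.sin (c*T)| := abs_sub _ _
    _ ≤ 1 + 1 := add_le_add (Real.abs_sin_le_one _) (Real.abs_sin_le_one _)
    _ = 2 := by norm_num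

lemma term_eq (n : ℕ) (hn : 1 ≤ n) (t : ℝ) :
    (n:ℂ) ^ (-(1+(t:ℂ)*Complex.I)) =
      (((n:ℝ)⁻¹ : ℝ) : ℂ) * Complex.exp ((-(Real.log n * t) : ℝ) * Complex.I) := by
  have hn0 : (0:ℝ) < n := by exact_mod_cast hn
  have h0 : (n:ℂ) ≠ 0 := by exact_mod_cast (ne_of_gt hn0)
  rw [Complex.cpow_def_of_ne_zero h0]
  have hlog : Complex.log (n:ℂ) = ((Real.log n : ℝ) : ℂ) := by
    rw [← Complex.ofReal_natCast, Complex.ofReal_log hn0.le]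
  rw [hlog]
  have : ((Real.log n : ℝ) : ℂ) * (-(1+(t:ℂ)*Complex.I)) =
      ((-(Real.log n) : ℝ) : ℂ) + ((-(Real.log n * t) : ℝ) : ℂ) * Complex.I := by
    push_cast; ring
  rw [this, Complex.exp_add]
  congr 1
  rw [← Complex.ofReal_exp, Real.exp_neg, Real.exp_log hn0]

lemma term_mul_conj (m n : ℕ) (hm : 1 ≤ m) (hn : 1 ≤ n) (t : ℝ) :
    ((m:ℂ) ^ (-(1+(t:ℂ)*Complex.I)) * (starRingEnd ℂ) ((n:ℂ) ^ (-(1+(t:ℂ)*Complex.I)))).re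
    = (m:ℝ)⁻¹ * (n:ℝ)⁻¹ * Real.cos ((Real.log m - Real.log n) * t) := by
  rw [term_eq m hm, term_eq n hn]
  rw [map_mul, Complex.conj_ofReal, ← Complex.exp_conj]
  have h1 : (starRingEnd ℂ) (((-(Real.log n * t) : ℝ) : ℂ) * Complex.I)
      = ((Real.log n * t : ℝ) : ℂ) * Complex.I := by
    rw [map_mul, Complex.conj_ofReal, Complex.conj_I]
    push_cast; ring
  rw [h1, mul_mul_mul_comm, ← Complex.exp_add]
  have h2 : ((-(Real.log m * t) : ℝ) : ℂ) * Complex.I + ((Real.log n * t : ℝ) : ℂ) * Complex.I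
       = (((Real.log n - Real.log m) * t : ℝ) : ℂ) * Complex.I := by push_cast; ring
  rw [h2, ← Complex.ofReal_mul, Complex.re_ofReal_mul, Complex.exp_ofReal_mul_I_re]
  rw [show (Real.log (n:ℝ) - Real.log (m:ℝ)) * t = -((Real.log (m:ℝ) - Real.log (n:ℝ)) * t) by ring,
    Real.cos_neg]

lemma absSq_sum (F : Finset ℕ) (hF : ∀ n ∈ F, 1 ≤ n) (t : ℝ) :
    ‖∑ n ∈ F, (n:ℂ) ^ (-(1+(t:ℂ)*Complex.I))‖^2
    = ∑ p ∈ F ×ˢ F, (p.1:ℝ)⁻¹ * (p.2:ℝ)⁻¹ * Real.cos ((Real.log p.1 - Real.log p.2) * t) := by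
  set z := ∑ n ∈ F, (n:ℂ) ^ (-(1+(t:ℂ)*Complex.I)) with hz
  have h1 : ‖z‖^2 = (z * (starRingEnd ℂ) z).re := by
    rw [Complex.mul_conj, Complex.sq_norm]; simp
  rw [h1, hz, map_sum, Finset.sum_mul_sum, Complex.re_sum, Finset.sum_product]
  refine Finset.sum_congr rfl fun m hm => ?_
  rw [Complex.re_sum]
  exact Finset.sum_congr rfl fun n hn => term_mul_conj m n (hF m hm) (hF n hn) t

lemma sum_inv_sqrt_le (K : ℕ) : ∑ n ∈ Finset.Icc 1 K, (Real.sqrt n)⁻¹ ≤ 2 * Real.sqrt K := by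
  induction K with
  | zero => simp
  | succ K ih =>
    rw [Finset.sum_Icc_succ_top (by norm_num)]
    have h1 : Real.sqrt K ≤ Real.sqrt (K+1) := by
      apply Real.sqrt_le_sqrt; push_cast; linarith
    have h2 : (0:ℝ) < Real.sqrt ((K:ℝ)+1) := by positivity
    have h3 : Real.sqrt K ^ 2 = K := Real.sq_sqrt (by positivity)
    have h4 : Real.sqrt ((K:ℝ)+1) ^ 2 = (K:ℝ)+1 := Real.sq_sqrt (by positivity)
    have h0 : (0:ℝ) ≤ Real.sqrt K := Real.sqrt_nonneg _
    have key : (Real.sqrt ((K:ℕ)+1:ℕ))⁻¹ ≤ 2*Real.sqrt ((K:ℝ)+1) - 2*Real.sqrt K := by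
      have hc : ((((K:ℕ)+1:ℕ)):ℝ) = (K:ℝ)+1 := by push_cast; ring
      rw [hc, inv_le_iff_one_le_mul₀ h2]
      nlinarith [sq_nonneg (Real.sqrt K - Real.sqrt ((K:ℝ)+1))]
    have hc : ((((K:ℕ)+1:ℕ)):ℝ) = (K:ℝ)+1 := by push_cast; ring
    calc ∑ n ∈ Finset.Icc 1 K, (Real.sqrt n)⁻¹ + (Real.sqrt ((K:ℕ)+1:ℕ))⁻¹
        ≤ 2*Real.sqrt K + (2*Real.sqrt ((K:ℝ)+1) - 2*Real.sqrt K) := by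
          exact add_le_add ih key
      _ = 2 * Real.sqrt ((K:ℝ)+1) := by ring
      _ = 2 * Real.sqrt (((K+1:ℕ)):ℝ) := by rw [hc]

lemma sum_inv_le (N : ℕ) : ∑ n ∈ Finset.Icc 1 N, ((n:ℝ))⁻¹ ≤ 1 + Real.log N := by
  have := harmonic_le_one_add_log N
  rw [harmonic_eq_sum_Icc] at this
  push_cast at this
  exact this

lemma sum_inv_sq_le (N : ℕ) : ∑ n ∈ Finset.Icc 1 N, ((n:ℝ)⁻¹)^2 ≤ 2 := by
  have key : ∀ M : ℕ, ∑ n ∈ Finset.Icc 1 M, ((n:ℝ)⁻¹)^2 ≤ 2 - ((M:ℝ))⁻¹ := by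
    intro M
    induction M with
    | zero => simp
    | succ M ih =>
      rw [Finset.sum_Icc_succ_top (by norm_num)]
      rcases Nat.eq_zero_or_pos M with h0 | h1
      · subst h0; norm_num
      · have hM : (1:ℝ) ≤ (M:ℝ) := by exact_mod_cast h1
        have hc : (((M+1:ℕ)):ℝ) = (M:ℝ)+1 := by push_cast; ring
        rw [hc]
        have e1 : (0:ℝ) < (M:ℝ) := by linarith
        have e2 : (0:ℝ) < (M:ℝ)+1 := by linarith
        have h5 : (M:ℝ) * (M:ℝ)⁻¹ = 1 := mul_inv_cancel₀ (ne_of_gt e1)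
        have h6 : ((M:ℝ)+1) * ((M:ℝ)+1)⁻¹ = 1 := mul_inv_cancel₀ (ne_of_gt e2)
        have key2 : (((M:ℝ)+1)⁻¹)^2 ≤ (M:ℝ)⁻¹ - ((M:ℝ)+1)⁻¹ := by
          nlinarith [inv_nonneg.mpr e1.le, inv_nonneg.mpr e2.le]
        linarith
  calc ∑ n ∈ Finset.Icc 1 N, ((n:ℝ)⁻¹)^2 ≤ 2 - ((N:ℝ))⁻¹ := key N
    _ ≤ 2 := by simp [inv_nonneg]

lemma second_moment (T : ℝ) (hT : 0 < T) (N : ℕ) (F : Finset ℕ) (hF : F ⊆ Finset.Icc 1 N) :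
    ∫ t in T..(2*T), ‖∑ n ∈ F, (n:ℂ) ^ (-(1+(t:ℂ)*Complex.I))‖^2
      ≤ 2*T + 4*(1+Real.log N)^2 := by
  classical
  have hF1 : ∀ n ∈ F, 1 ≤ n := fun n h => (Finset.mem_Icc.mp (hF h)).1
  have hlogN : (0:ℝ) ≤ 1 + Real.log N := by
    rcases Nat.eq_zero_or_pos N with h|h
    · simp [h]
    · have h1 : (1:ℝ) ≤ N := by exact_mod_cast h
      linarith [Real.log_nonneg h1]
  have hcongr : (∫ t in T..(2*T), ‖∑ n ∈ F, (n:ℂ) ^ (-(1+(t:ℂ)*Complex.I))‖^2)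
      = ∑ p ∈ F ×ˢ F, ∫ t in T..(2*T),
          (p.1:ℝ)⁻¹ * (p.2:ℝ)⁻¹ * Real.cos ((Real.log p.1 - Real.log p.2) * t) := by
    rw [← intervalIntegral.integral_finset_sum]
    · exact intervalIntegral.integral_congr (fun t _ => by rw [absSq_sum F hF1 t])
    · intro p hp
      apply Continuous.intervalIntegrable
      fun_prop
  rw [hcongr, ← Finset.sum_filter_add_sum_filter_not (F ×ˢ F) (fun p => p.1 = p.2)]
  -- diagonal
  have hdiag : ∑ p ∈ (F ×ˢ F).filter (fun p => p.1 = p.2), (∫ t in T..(2*T),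
      (p.1:ℝ)⁻¹ * (p.2:ℝ)⁻¹ * Real.cos ((Real.log p.1 - Real.log p.2) * t)) ≤ 2*T := by
    have hset : (F ×ˢ F).filter (fun p => p.1 = p.2) = F.image (fun n => (n,n)) := by
      ext p
      simp only [Finset.mem_filter, Finset.mem_product, Finset.mem_image]
      constructor
      · rintro ⟨⟨h1,h2⟩,h3⟩
        exact ⟨p.1, h1, by rw [Prod.ext_iff]; exact ⟨rfl, h3⟩⟩
      · rintro ⟨n, hn, rfl⟩; exact ⟨⟨hn,hn⟩, rfl⟩
    rw [hset, Finset.sum_image (by intro x hx y hy h; simpa [Prod.ext_iff] using h)]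
    have heq : ∀ n ∈ F, (∫ t in T..(2*T),
        (n:ℝ)⁻¹ * (n:ℝ)⁻¹ * Real.cos ((Real.log n - Real.log n) * t)) = T * ((n:ℝ)⁻¹)^2 := by
      intro n hn
      simp only [sub_self, zero_mul, Real.cos_zero, mul_one]
      rw [intervalIntegral.integral_const, smul_eq_mul]
      ring
    rw [Finset.sum_congr rfl heq, ← Finset.mul_sum]
    have h2 : ∑ n ∈ F, ((n:ℝ)⁻¹)^2 ≤ 2 :=
      le_trans (Finset.sum_le_sum_of_subset_of_nonneg hF (by intros; positivity)) (sum_inv_sq_le N)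
    nlinarith
  -- off-diagonal
  set B : ℕ × ℕ → ℝ := fun p => 2 * (((min p.1 p.2 : ℕ)):ℝ)⁻¹ * (|(p.1:ℝ) - (p.2:ℝ)|)⁻¹ with hB
  have hBnn : ∀ p, 0 ≤ B p := by intro p; positivity
  have hterm : ∀ p ∈ (F ×ˢ F).filter (fun p => ¬ p.1 = p.2), (∫ t in T..(2*T),
      (p.1:ℝ)⁻¹ * (p.2:ℝ)⁻¹ * Real.cos ((Real.log p.1 - Real.log p.2) * t)) ≤ B p := by
    rintro ⟨m, n⟩ hp
    simp only [Finset.mem_filter, Finset.mem_product] at hp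
    obtain ⟨⟨hmF, hnF⟩, hmn⟩ := hp
    have hm1 : 1 ≤ m := hF1 m hmF
    have hn1 : 1 ≤ n := hF1 n hnF
    -- key bound for ordered case
    have main : ∀ (a b : ℕ), 1 ≤ a → a < b →
        (a:ℝ)⁻¹ * (b:ℝ)⁻¹ * |∫ t in T..(2*T), Real.cos ((Real.log a - Real.log b) * t)|
          ≤ 2 * (a:ℝ)⁻¹ * ((b:ℝ) - a)⁻¹ := by
      intro a b ha hab
      have ha0 : (0:ℝ) < a := by exact_mod_cast ha
      have hb0 : (0:ℝ) < b := lt_trans ha0 (by exact_mod_cast hab)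
      have hba : (a:ℝ) < b := by exact_mod_cast hab
      have hd : (0:ℝ) < (b:ℝ) - a := by linarith
      have hgap := log_gap ha hab
      have hc0 : Real.log a - Real.log b ≠ 0 := by
        have := Real.log_lt_log ha0 hba
        intro h; linarith [sub_eq_zero.mp h]
      have hci := int_cos_bound hc0 T
      have habs : ((b:ℝ) - a)/b ≤ |Real.log a - Real.log b| := by
        rw [abs_sub_comm, abs_of_pos (by linarith [Real.log_lt_log ha0 hba] : (0:ℝ) < Real.log b - Real.log a)]
        linarith
      have h1 : |∫ t in T..(2*T), Real.cos ((Real.log a - Real.log b) * t)| ≤ 2 * (b:ℝ) / ((b:ℝ) - a) := by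
        refine hci.trans ?_
        rw [div_le_div_iff₀ (abs_pos.mpr hc0) hd]
        have h2 : ((b:ℝ) - a) ≤ |Real.log a - Real.log b| * b := (div_le_iff₀ hb0).mp habs
        nlinarith
      calc (a:ℝ)⁻¹ * (b:ℝ)⁻¹ * |∫ t in T..(2*T), Real.cos ((Real.log a - Real.log b) * t)|
          ≤ (a:ℝ)⁻¹ * (b:ℝ)⁻¹ * (2 * (b:ℝ) / ((b:ℝ) - a)) := by
            apply mul_le_mul_of_nonneg_left h1 (by positivity)
        _ = 2 * (a:ℝ)⁻¹ * ((b:ℝ) - a)⁻¹ := by field_simp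
    -- reduce to ordered cases
    rw [intervalIntegral.integral_const_mul]
    rcases lt_or_gt_of_ne hmn with h | h
    · have hmin : min m n = m := min_eq_left h.le
      have habs2 : |(m:ℝ) - (n:ℝ)| = (n:ℝ) - m := by
        rw [abs_sub_comm]
        exact abs_of_pos (by linarith [show (m:ℝ) < n from by exact_mod_cast h])
      calc (m:ℝ)⁻¹ * (n:ℝ)⁻¹ * ∫ t in T..(2*T), Real.cos ((Real.log m - Real.log n) * t)
          ≤ (m:ℝ)⁻¹ * (n:ℝ)⁻¹ * |∫ t in T..(2*T), Real.cos ((Real.log m - Real.log n) * t)| := by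
            apply mul_le_mul_of_nonneg_left (le_abs_self _) (by positivity)
        _ ≤ 2 * (m:ℝ)⁻¹ * ((n:ℝ) - m)⁻¹ := main m n hm1 h
        _ = B (m, n) := by rw [hB]; simp only [hmin, habs2]
    · have hmin : min m n = n := min_eq_right h.le
      have habs2 : |(m:ℝ) - (n:ℝ)| = (m:ℝ) - n := by
        exact abs_of_pos (by linarith [show (n:ℝ) < m from by exact_mod_cast h])
      have hcos : ∀ t : ℝ, Real.cos ((Real.log m - Real.log n) * t)
          = Real.cos ((Real.log n - Real.log m) * t) := by
        intro t
        rw [show (Real.log m - Real.log n) * t = -((Real.log n - Real.log m) * t) by ring,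
          Real.cos_neg]
      have hIeq : (∫ t in T..(2*T), Real.cos ((Real.log m - Real.log n) * t))
          = ∫ t in T..(2*T), Real.cos ((Real.log n - Real.log m) * t) :=
        intervalIntegral.integral_congr (fun t _ => hcos t)
      calc (m:ℝ)⁻¹ * (n:ℝ)⁻¹ * ∫ t in T..(2*T), Real.cos ((Real.log m - Real.log n) * t)
          ≤ (n:ℝ)⁻¹ * (m:ℝ)⁻¹ * |∫ t in T..(2*T), Real.cos ((Real.log n - Real.log m) * t)| := by
            rw [hIeq]
            calc (m:ℝ)⁻¹ * (n:ℝ)⁻¹ * ∫ t in T..(2*T), Real.cos ((Real.log n - Real.log m) * t)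
                ≤ (m:ℝ)⁻¹ * (n:ℝ)⁻¹ * |∫ t in T..(2*T), Real.cos ((Real.log n - Real.log m) * t)| :=
                  mul_le_mul_of_nonneg_left (le_abs_self _) (by positivity)
              _ = (n:ℝ)⁻¹ * (m:ℝ)⁻¹ * |∫ t in T..(2*T), Real.cos ((Real.log n - Real.log m) * t)| := by ring
        _ ≤ 2 * (n:ℝ)⁻¹ * ((m:ℝ) - n)⁻¹ := main n m hn1 h
        _ = B (m, n) := by rw [hB]; simp only [hmin, habs2]
  -- sum the off-diagonal bound
  set O' := ((Finset.Icc 1 N) ×ˢ (Finset.Icc 1 N)).filter (fun p => ¬ p.1 = p.2) with hO'def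
  set G : ℕ×ℕ → ℝ := fun q => 2 * (q.1:ℝ)⁻¹ * (q.2:ℝ)⁻¹ with hG
  have hGnn : ∀ q, 0 ≤ G q := by intro q; rw [hG]; positivity
  have hGsum : ∑ q ∈ (Finset.Icc 1 N) ×ˢ (Finset.Icc 1 N), G q ≤ 2*(1+Real.log N)^2 := by
    rw [Finset.sum_product]
    have hrow : ∀ a ∈ Finset.Icc 1 N, ∑ b ∈ Finset.Icc 1 N, G (a,b)
        = (2*(a:ℝ)⁻¹) * ∑ b ∈ Finset.Icc 1 N, (b:ℝ)⁻¹ := by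
      intro a _
      rw [Finset.mul_sum]
    rw [Finset.sum_congr rfl hrow, ← Finset.sum_mul]
    have hs := sum_inv_le N
    have hs2 : ∑ a ∈ Finset.Icc 1 N, 2*(a:ℝ)⁻¹ = 2 * ∑ a ∈ Finset.Icc 1 N, (a:ℝ)⁻¹ := by
      rw [Finset.mul_sum]
    rw [hs2]
    have hnn : (0:ℝ) ≤ ∑ a ∈ Finset.Icc 1 N, (a:ℝ)⁻¹ :=
      Finset.sum_nonneg (fun i _ => by positivity)
    nlinarith
  have hOsplit : ∀ (S : Finset (ℕ×ℕ)), S ⊆ O' → (∀ p ∈ S, p.1 < p.2) →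
      ∑ p ∈ S, G (p.1, p.2 - p.1) ≤ 2*(1+Real.log N)^2 := by
    intro S hSO hSlt
    have hinj : ∀ p ∈ S, ∀ q ∈ S, (fun p : ℕ×ℕ => (p.1, p.2 - p.1)) p
        = (fun p : ℕ×ℕ => (p.1, p.2 - p.1)) q → p = q := by
      rintro ⟨m,n⟩ hm ⟨a,b⟩ ha h
      simp only [Prod.mk.injEq] at h
      have h1 := hSlt _ hm
      have h2 := hSlt _ ha
      simp only at h1 h2
      rw [Prod.mk.injEq]
      omega
    rw [← Finset.sum_image hinj]
    refine le_trans (Finset.sum_le_sum_of_subset_of_nonneg ?_ (fun q _ _ => hGnn q)) hGsum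
    intro q hq
    simp only [Finset.mem_image] at hq
    obtain ⟨p, hp, rfl⟩ := hq
    have hmem := hSO hp
    rw [hO'def, Finset.mem_filter, Finset.mem_product, Finset.mem_Icc, Finset.mem_Icc] at hmem
    have hlt := hSlt _ hp
    simp only [Finset.mem_product, Finset.mem_Icc]
    omega
  have hoff : ∑ p ∈ (F ×ˢ F).filter (fun p => ¬ p.1 = p.2), (∫ t in T..(2*T),
      (p.1:ℝ)⁻¹ * (p.2:ℝ)⁻¹ * Real.cos ((Real.log p.1 - Real.log p.2) * t))
        ≤ 4*(1+Real.log N)^2 := by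
    have step1 : ∑ p ∈ (F ×ˢ F).filter (fun p => ¬ p.1 = p.2), (∫ t in T..(2*T),
        (p.1:ℝ)⁻¹ * (p.2:ℝ)⁻¹ * Real.cos ((Real.log p.1 - Real.log p.2) * t))
          ≤ ∑ p ∈ O', B p := by
      refine le_trans (Finset.sum_le_sum hterm) ?_
      refine Finset.sum_le_sum_of_subset_of_nonneg ?_ (fun p _ _ => hBnn p)
      exact Finset.filter_subset_filter _ (Finset.product_subset_product hF hF)
    refine step1.trans ?_
    rw [← Finset.sum_filter_add_sum_filter_not O' (fun p => p.1 < p.2)]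
    have hpart1 : ∑ p ∈ O'.filter (fun p => p.1 < p.2), B p ≤ 2*(1+Real.log N)^2 := by
      have hBG : ∀ p ∈ O'.filter (fun p => p.1 < p.2), B p = G (p.1, p.2 - p.1) := by
        rintro ⟨m,n⟩ hp
        simp only [Finset.mem_filter, hO'def, Finset.mem_product, Finset.mem_Icc] at hp
        obtain ⟨⟨⟨⟨hm1,hmN⟩,⟨hn1,hnN⟩⟩,hne⟩,hlt⟩ := hp
        simp only [hB, hG]
        rw [min_eq_left hlt.le]
        have hcast : ((n - m : ℕ):ℝ) = (n:ℝ) - m := by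
          push_cast [Nat.cast_sub hlt.le]; ring
        have habs2 : |(m:ℝ) - (n:ℝ)| = (n:ℝ) - m := by
          rw [abs_sub_comm]
          exact abs_of_pos (by linarith [show (m:ℝ) < n from by exact_mod_cast hlt])
        rw [habs2, hcast]
      rw [Finset.sum_congr rfl hBG]
      exact hOsplit _ (Finset.filter_subset _ _)
        (fun p hp => (Finset.mem_filter.mp hp).2)
    have hpart2 : ∑ p ∈ O'.filter (fun p => ¬ p.1 < p.2), B p ≤ 2*(1+Real.log N)^2 := by
      -- here p.2 < p.1
      have hBG : ∀ p ∈ O'.filter (fun p => ¬ p.1 < p.2), B p = G (p.2, p.1 - p.2) := by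
        rintro ⟨m,n⟩ hp
        simp only [Finset.mem_filter, hO'def, Finset.mem_product, Finset.mem_Icc] at hp
        obtain ⟨⟨⟨⟨hm1,hmN⟩,⟨hn1,hnN⟩⟩,hne⟩,hnlt⟩ := hp
        have hlt : n < m := by omega
        simp only [hB, hG]
        rw [min_eq_right hlt.le]
        have hcast : ((m - n : ℕ):ℝ) = (m:ℝ) - n := by
          push_cast [Nat.cast_sub hlt.le]; ring
        have habs2 : |(m:ℝ) - (n:ℝ)| = (m:ℝ) - n := by
          exact abs_of_pos (by linarith [show (n:ℝ) < m from by exact_mod_cast hlt])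
        rw [habs2, hcast]
      rw [Finset.sum_congr rfl hBG]
      -- swap coordinates: use hOsplit on the swapped set
      have hswap : ∑ p ∈ O'.filter (fun p => ¬ p.1 < p.2), G (p.2, p.1 - p.2)
          = ∑ p ∈ (O'.filter (fun p => ¬ p.1 < p.2)).image Prod.swap, G (p.1, p.2 - p.1) := by
        rw [Finset.sum_image (by rintro ⟨m,n⟩ _ ⟨a,b⟩ _ h; simpa [Prod.ext_iff, And.comm] using h)]
        exact Finset.sum_congr rfl (fun p _ => rfl)
      rw [hswap]
      refine hOsplit _ ?_ ?_
      · intro q hq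
        simp only [Finset.mem_image] at hq
        obtain ⟨p, hp, rfl⟩ := hq
        simp only [Finset.mem_filter, hO'def, Finset.mem_product] at hp ⊢
        exact ⟨⟨hp.1.1.2, hp.1.1.1⟩, fun h => hp.1.2 h.symm⟩
      · intro q hq
        simp only [Finset.mem_image] at hq
        obtain ⟨p, hp, rfl⟩ := hq
        simp only [Finset.mem_filter] at hp
        have := hp.2
        have hne := hp.1
        simp only [hO'def, Finset.mem_filter] at hne
        simp only [Prod.fst_swap, Prod.snd_swap]
        omega
    linarith
  linarith

lemma primes_eq (y : ℝ) :
    Finset.filter Nat.Prime (Finset.Iic ⌊y⌋₊) = (⌊y⌋₊+1).primesBelow := by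
  ext p
  simp [Nat.primesBelow, Nat.lt_succ_iff]

noncomputable def sqrtHom : ℕ →* ℝ where
  toFun n := (Real.sqrt n)⁻¹
  map_one' := by simp
  map_mul' m n := by
    show (Real.sqrt ((m*n : ℕ):ℝ))⁻¹ = _
    rw [Nat.cast_mul, Real.sqrt_mul (Nat.cast_nonneg m), mul_inv]

lemma sqrtHom_apply (n : ℕ) : sqrtHom n = (Real.sqrt n)⁻¹ := rfl

lemma sqrtHom_lt_one {p : ℕ} (hp : p.Prime) : ‖sqrtHom p‖ < 1 := by
  rw [sqrtHom_apply]
  have h2 : (1:ℝ) < Real.sqrt p := by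
    rw [show (1:ℝ) = Real.sqrt 1 by simp]
    exact Real.sqrt_lt_sqrt (by norm_num) (by exact_mod_cast hp.one_lt)
  have h0 : (0:ℝ) < Real.sqrt p := by linarith
  rw [Real.norm_eq_abs, abs_of_nonneg (by positivity)]
  exact inv_lt_one_of_one_lt₀ h2

lemma prod_sqrt_bound (K : ℕ) :
    ∏ p ∈ K.primesBelow, (1 - (Real.sqrt p)⁻¹)⁻¹ ≤ Real.exp (8 * Real.sqrt K) := by
  have hfac : ∀ p ∈ K.primesBelow, (1 - (Real.sqrt p)⁻¹)⁻¹ ≤ Real.exp (4 * (Real.sqrt p)⁻¹) := by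
    intro p hp
    have hprime : p.Prime := (Nat.mem_primesBelow.mp hp).2
    have h2 : (4/3 : ℝ) ≤ Real.sqrt p := by
      rw [show (4/3:ℝ) = Real.sqrt ((4/3)^2) by rw [Real.sqrt_sq (by norm_num)]]
      apply Real.sqrt_le_sqrt
      have : (2:ℝ) ≤ p := by exact_mod_cast hprime.two_le
      nlinarith
    have h0 : (0:ℝ) < Real.sqrt p := by linarith
    set x := (Real.sqrt p)⁻¹ with hx
    have hx0 : 0 < x := by positivity
    have hx34 : x ≤ 3/4 := by
      rw [hx, show (3/4:ℝ) = (4/3)⁻¹ by norm_num]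
      exact inv_anti₀ (by norm_num) h2
    have h1x : 0 < 1 - x := by linarith
    have step : (1-x)⁻¹ ≤ 1 + 4*x := by
      rw [inv_le_iff_one_le_mul₀ h1x]
      nlinarith
    refine step.trans ?_
    linarith [Real.add_one_le_exp (4*x)]
  calc ∏ p ∈ K.primesBelow, (1 - (Real.sqrt p)⁻¹)⁻¹
      ≤ ∏ p ∈ K.primesBelow, Real.exp (4 * (Real.sqrt p)⁻¹) := by
        apply Finset.prod_le_prod _ hfac
        intro p hp
        have hprime := (Nat.mem_primesBelow.mp hp).2
        have h2 : (1:ℝ) < Real.sqrt p := by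
          rw [show (1:ℝ) = Real.sqrt 1 by simp]
          exact Real.sqrt_lt_sqrt (by norm_num) (by exact_mod_cast hprime.one_lt)
        have hlt : (Real.sqrt (p:ℝ))⁻¹ < 1 := inv_lt_one_of_one_lt₀ h2
        exact inv_nonneg.mpr (by linarith)
    _ = Real.exp (∑ p ∈ K.primesBelow, 4 * (Real.sqrt p)⁻¹) := (Real.exp_sum _ _).symm
    _ ≤ Real.exp (8 * Real.sqrt K) := by
        apply Real.exp_le_exp.mpr
        have hsubset : K.primesBelow ⊆ Finset.Icc 1 K := by
          intro p hp
          obtain ⟨hlt, hprime⟩ := Nat.mem_primesBelow.mp hp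
          exact Finset.mem_Icc.mpr ⟨hprime.one_lt.le.trans (le_refl _) |>.trans' (by omega), by omega⟩
        calc ∑ p ∈ K.primesBelow, 4 * (Real.sqrt p)⁻¹
            ≤ ∑ n ∈ Finset.Icc 1 K, 4 * (Real.sqrt n)⁻¹ :=
              Finset.sum_le_sum_of_subset_of_nonneg hsubset (fun n _ _ => by positivity)
          _ = 4 * ∑ n ∈ Finset.Icc 1 K, (Real.sqrt n)⁻¹ := by rw [Finset.mul_sum]
          _ ≤ 4 * (2 * Real.sqrt K) := by
              have := sum_inv_sqrt_le K
              linarith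
          _ = 8 * Real.sqrt K := by ring

lemma zetaY_tail (y : ℝ) (t : ℝ) (N : ℕ) (hN : 1 ≤ N) :
    ‖zetaY y (1 + (t:ℂ) * Complex.I)
      - ∑ n ∈ (Finset.Icc 1 N).filter (· ∈ Nat.smoothNumbers (⌊y⌋₊+1)), (n:ℂ) ^ (-(1+(t:ℂ)*Complex.I))‖
    ≤ Real.exp (8 * Real.sqrt (⌊y⌋₊+1)) / Real.sqrt N := by
  classical
  set K := ⌊y⌋₊ + 1 with hK
  set s : ℂ := 1 + (t:ℂ) * Complex.I with hsdef
  have hs : s ≠ 0 := by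
    intro h
    have := congrArg Complex.re h
    simp [hsdef] at this
  set f := riemannZetaSummandHom hs with hfdef
  have hf : ∀ (n:ℕ), f n = (n:ℂ)^(-s) := fun n => rfl
  have hnorm : ∀ n : ℕ, 1 ≤ n → ‖f n‖ = (n:ℝ)⁻¹ := by
    intro n hn
    rw [hf, Complex.norm_natCast_cpow_of_pos (by omega)]
    have : (-s).re = -1 := by simp [hsdef]
    rw [this, Real.rpow_neg_one]
  have hf1 : ∀ {p : ℕ}, p.Prime → ‖f.toMonoidHom p‖ < 1 := by
    intro p hp
    rw [show f.toMonoidHom p = f p from rfl, hnorm p hp.one_lt.le]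
    rw [inv_lt_one_iff₀]
    right
    exact_mod_cast hp.one_lt
  obtain ⟨hsummable, hhassum⟩ :=
    EulerProduct.summable_and_hasSum_smoothNumbers_prod_primesBelow_geometric
      (f := f.toMonoidHom) hf1 K
  have hprod : zetaY y s = ∑' m : (Nat.smoothNumbers K), f m := by
    have h1 : zetaY y s = ∏ p ∈ K.primesBelow, (1 - (p:ℂ)^(-s))⁻¹ := by
      simp only [zetaY]
      rw [primes_eq y]
    rw [h1]
    exact (hhassum.tsum_eq).symm
  have hsub : Summable (fun m : (Nat.smoothNumbers K) => f m) := ⟨_, hhassum⟩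
  set a : ℕ → ℂ := (Nat.smoothNumbers K).indicator (fun n => f n) with hadef
  have hsa : Summable a := summable_subtype_iff_indicator.mp hsub
  have htsa : zetaY y s = ∑' n : ℕ, a n := by rw [hprod, tsum_subtype]
  have hsplit := Summable.sum_add_tsum_compl (s := Finset.Icc 1 N) hsa
  have hfin : ∑ n ∈ Finset.Icc 1 N, a n
      = ∑ n ∈ (Finset.Icc 1 N).filter (· ∈ Nat.smoothNumbers K), (n:ℂ)^(-s) := by
    rw [Finset.sum_filter]
    exact Finset.sum_congr rfl (fun n _ => by
      simp [hadef, Set.indicator_apply, hf])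
  have htail : zetaY y s - ∑ n ∈ (Finset.Icc 1 N).filter (· ∈ Nat.smoothNumbers K), (n:ℂ)^(-s)
      = ∑' x : ↥(((Finset.Icc 1 N : Finset ℕ) : Set ℕ)ᶜ), a ↑x := by
    rw [htsa, ← hfin, ← hsplit]
    ring
  rw [htail]
  -- bound the tail
  have hsan : Summable (fun n => ‖a n‖) := by
    have heq : (fun n => ‖a n‖) = (Nat.smoothNumbers K).indicator (fun n => ‖f n‖) := by
      funext n
      simp only [hadef, Set.indicator_apply]
      split_ifs <;> simp
    rw [heq]
    exact summable_subtype_iff_indicator.mp hsummable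
  -- b : the sqrt majorant
  set b : ℕ → ℝ := (Nat.smoothNumbers K).indicator (fun n => (Real.sqrt n)⁻¹) with hbdef
  obtain ⟨hbsummable, hbhassum⟩ :=
    EulerProduct.summable_and_hasSum_smoothNumbers_prod_primesBelow_geometric
      (f := sqrtHom) (fun hp => sqrtHom_lt_one hp) K
  have hbs : Summable b := by
    apply summable_subtype_iff_indicator.mp
    exact hbhassum.summable
  have hbnn : ∀ n, 0 ≤ b n := by
    intro n
    simp only [hbdef, Set.indicator_apply]
    split_ifs <;> positivity
  have hball : ∀ n : ℕ, n ∉ Finset.Icc 1 N → ‖a n‖ ≤ (Real.sqrt N)⁻¹ * b n := by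
    intro n hn
    by_cases hsm : n ∈ Nat.smoothNumbers K
    · have hn0 : n ≠ 0 := hsm.1
      have hn1 : 1 ≤ n := Nat.one_le_iff_ne_zero.mpr hn0
      have hnN : N < n := by
        simp only [Finset.mem_Icc, not_and, not_le] at hn
        omega
      have ha : ‖a n‖ = (n:ℝ)⁻¹ := by
        simp only [hadef, Set.indicator_apply, if_pos hsm]
        exact hnorm n hn1
      have hb : b n = (Real.sqrt n)⁻¹ := by
        simp only [hbdef, Set.indicator_apply, if_pos hsm]
      rw [ha, hb, ← mul_inv]
      apply inv_anti₀
      · positivity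
      · calc Real.sqrt N * Real.sqrt n ≤ Real.sqrt n * Real.sqrt n := by
              apply mul_le_mul_of_nonneg_right _ (Real.sqrt_nonneg _)
              exact Real.sqrt_le_sqrt (by exact_mod_cast hnN.le)
          _ = (n:ℝ) := Real.mul_self_sqrt (by positivity)
    · simp only [hadef, hbdef, Set.indicator_apply, if_neg hsm]
      simp
  calc ‖∑' x : ↥(((Finset.Icc 1 N : Finset ℕ) : Set ℕ)ᶜ), a ↑x‖
      ≤ ∑' x : ↥(((Finset.Icc 1 N : Finset ℕ) : Set ℕ)ᶜ), ‖a ↑x‖ := by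
        exact norm_tsum_le_tsum_norm (hsan.subtype _)
    _ ≤ ∑' x : ↥(((Finset.Icc 1 N : Finset ℕ) : Set ℕ)ᶜ), (Real.sqrt N)⁻¹ * b ↑x := by
        apply Summable.tsum_le_tsum _ (hsan.subtype _) ((hbs.mul_left _).subtype _)
        rintro ⟨n, hn⟩
        exact hball n hn
    _ = (Real.sqrt N)⁻¹ * ∑' x : ↥(((Finset.Icc 1 N : Finset ℕ) : Set ℕ)ᶜ), b ↑x := by
        rw [tsum_mul_left]
    _ ≤ (Real.sqrt N)⁻¹ * ∑' n : ℕ, b n := by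
        apply mul_le_mul_of_nonneg_left _ (by positivity)
        exact Summable.tsum_subtype_le b _ hbnn hbs
    _ ≤ (Real.sqrt N)⁻¹ * Real.exp (8 * Real.sqrt K) := by
        apply mul_le_mul_of_nonneg_left _ (by positivity)
        have : ∑' n : ℕ, b n = ∏ p ∈ K.primesBelow, (1 - (Real.sqrt p)⁻¹)⁻¹ := by
          rw [hbdef, ← tsum_subtype]
          exact hbhassum.tsum_eq
        rw [this]
        exact prod_sqrt_bound K
    _ = Real.exp (8 * Real.sqrt K) / Real.sqrt N := by
        rw [div_eq_inv_mul]
    _ = Real.exp (8 * Real.sqrt ((⌊y⌋₊:ℝ) + 1)) / Real.sqrt N := by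
        rw [hK]; push_cast; ring_nf
  -- done


lemma measure_bound {T ε : ℝ} (hT : 0 < T) (hε : 0 < ε) {φ : ℝ → ℝ} (hφc : Continuous φ)
    (hφ0 : ∀ x, 0 ≤ φ x) {S : Set ℝ} (hS : ∀ t ∈ S, t ∈ Set.Icc T (2*T) ∧ ε ≤ φ t) :
    (volume S).toReal ≤ (∫ t in T..(2*T), φ t) / ε := by
  set μ := volume.restrict (Set.Icc T (2*T)) with hμ
  have hint : Integrable φ μ := hφc.continuousOn.integrableOn_compact isCompact_Icc
  have hcheb := mul_meas_ge_le_integral_of_nonneg (ae_of_all μ hφ0) hint ε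
  have hsub : volume S ≤ μ {x | ε ≤ φ x} := by
    rw [hμ, Measure.restrict_apply' measurableSet_Icc]
    exact measure_mono (fun t ht => ⟨(hS t ht).2, (hS t ht).1⟩)
  have hfin : μ {x | ε ≤ φ x} ≠ ⊤ := by
    apply ne_of_lt
    calc μ {x | ε ≤ φ x} ≤ μ Set.univ := measure_mono (Set.subset_univ _)
      _ = volume (Set.Icc T (2*T)) := by rw [hμ, Measure.restrict_apply_univ]
      _ < ⊤ := measure_Icc_lt_top
  have h1 : (volume S).toReal ≤ (μ {x | ε ≤ φ x}).toReal := ENNReal.toReal_mono hfin hsub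
  have h2 : ∫ x, φ x ∂μ = ∫ t in T..(2*T), φ t := by
    rw [intervalIntegral.integral_of_le (by linarith), hμ, ← integral_Icc_eq_integral_Ioc]
  rw [le_div_iff₀ hε]
  calc (volume S).toReal * ε = ε * (volume S).toReal := mul_comm _ _
    _ ≤ ε * (μ {x | ε ≤ φ x}).toReal := mul_le_mul_of_nonneg_left h1 hε.le
    _ ≤ ∫ x, φ x ∂μ := hcheb
    _ = _ := h2

noncomputable def hdom : ℝ → ℝ := fun u => if u ≤ 3 then 1 else 8/u^2

lemma hdom_int : IntegrableOn hdom (Set.Ioi 0) ∧ (∫ u in Set.Ioi (0:ℝ), hdom u) ≤ 6 := by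
  have hsplit : Set.Ioi (0:ℝ) = Set.Ioc 0 3 ∪ Set.Ioi 3 := by
    ext u
    simp only [Set.mem_Ioi, Set.mem_union, Set.mem_Ioc]
    constructor
    · intro h
      rcases le_or_gt u 3 with h3 | h3
      · exact Or.inl ⟨h, h3⟩
      · exact Or.inr h3
    · rintro (⟨h,_⟩ | h) <;> linarith
  have heq2 : ∀ u ∈ Set.Ioi (3:ℝ), hdom u = 8 * u^(-2:ℝ) := by
    intro u hu
    have hu3 : (3:ℝ) < u := hu
    have hu0 : (0:ℝ) < u := by linarith
    show (if u ≤ 3 then (1:ℝ) else 8/u^2) = 8 * u^(-2:ℝ)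
    rw [if_neg (not_le.mpr hu3), show (-2:ℝ) = -((2:ℕ):ℝ) by norm_num,
      Real.rpow_neg hu0.le, Real.rpow_natCast]
    ring
  have hc1 : IntegrableOn (fun _ : ℝ => (1:ℝ)) (Set.Ioc (0:ℝ) 3) :=
    (integrableOn_const_iff (by simp)).mpr (Or.inr measure_Ioc_lt_top)
  have hint1 : IntegrableOn hdom (Set.Ioc 0 3) := by
    apply hc1.congr
    apply (ae_restrict_iff' measurableSet_Ioc).mpr
    apply ae_of_all
    intro u hu
    show (1:ℝ) = (if u ≤ 3 then (1:ℝ) else 8/u^2)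
    rw [if_pos hu.2]
  have hint2 : IntegrableOn hdom (Set.Ioi 3) := by
    apply Integrable.congr ((integrableOn_Ioi_rpow_of_lt (by norm_num : (-2:ℝ) < -1) (by norm_num : (0:ℝ) < 3)).const_mul 8)
    apply (ae_restrict_iff' measurableSet_Ioi).mpr
    exact ae_of_all _ (fun u hu => (heq2 u hu).symm)
  have hIOn : IntegrableOn hdom (Set.Ioi 0) := by
    rw [hsplit]; exact hint1.union hint2
  refine ⟨hIOn, ?_⟩
  rw [hsplit, setIntegral_union (Set.Ioc_disjoint_Ioi le_rfl) measurableSet_Ioi hint1 hint2]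
  have hv1 : ∫ u in Set.Ioc (0:ℝ) 3, hdom u = 3 := by
    rw [setIntegral_congr_fun measurableSet_Ioc (g := fun _ => (1:ℝ))
      (fun u hu => by show (if u ≤ 3 then (1:ℝ) else 8/u^2) = 1; rw [if_pos hu.2])]
    simp [Real.volume_Ioc]
  have hv2 : ∫ u in Set.Ioi (3:ℝ), hdom u = 8/3 := by
    rw [setIntegral_congr_fun measurableSet_Ioi (g := fun u => 8 * u^(-2:ℝ)) heq2]
    rw [MeasureTheory.integral_const_mul, integral_Ioi_rpow_of_lt (by norm_num) (by norm_num)]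
    norm_num [Real.rpow_neg_one]
  rw [hv1, hv2]
  norm_num

lemma eventual (A : ℝ) (hA : 0 < A) : ∀ᶠ T in Filter.atTop, ((3:ℝ) ≤ T ∧
    16*(1+Real.log 2+Real.log T)^2 ≤ T ∧
    16*Real.sqrt (Real.log T * Real.log (Real.log T)^A + 1) ≤ Real.log T) := by
  have h2 : ∀ᶠ T : ℝ in Filter.atTop, 16*(1+Real.log 2+Real.log T)^2 ≤ T := by
    have hlim := Real.tendsto_pow_log_div_mul_add_atTop 1 0 2 one_ne_zero
    have hev1 := hlim.eventually_lt_const (show (0:ℝ) < 1/64 by norm_num)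
    filter_upwards [hev1, Filter.eventually_ge_atTop (Real.exp 2),
      Filter.eventually_gt_atTop (0:ℝ)] with T hT1 hT2 hT3
    have hlog2 : 2 ≤ Real.log T := (Real.le_log_iff_exp_le hT3).mpr hT2
    have hl2 : Real.log 2 ≤ 1 := by linarith [Real.log_two_lt_d9]
    have hup : 1 + Real.log 2 + Real.log T ≤ 2*Real.log T := by linarith
    have hnn : 0 ≤ 1 + Real.log 2 + Real.log T := by linarith [Real.log_two_gt_d9]
    have hsq : (1+Real.log 2+Real.log T)^2 ≤ 4*(Real.log T)^2 := by nlinarith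
    have hT1' : Real.log T^2 < (1/64)*(1*T+0) := by
      rw [div_lt_iff₀ (by linarith : (0:ℝ) < 1*T+0)] at hT1
      linarith
    nlinarith
  have h3 : ∀ᶠ T : ℝ in Filter.atTop,
      16*Real.sqrt (Real.log T * Real.log (Real.log T)^A + 1) ≤ Real.log T := by
    suffices hE : ∀ᶠ L : ℝ in Filter.atTop, 16*Real.sqrt (L * Real.log L^A + 1) ≤ L from
      Real.tendsto_log_atTop.eventually hE
    set n := ⌈A⌉₊ with hn
    have hlim := Real.tendsto_pow_log_div_mul_add_atTop 1 0 n one_ne_zero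
    have hev := hlim.eventually_lt_const (show (0:ℝ) < 1/1024 by norm_num)
    filter_upwards [hev, Filter.eventually_ge_atTop (Real.exp 1),
      Filter.eventually_ge_atTop (32:ℝ), Filter.eventually_gt_atTop (0:ℝ)] with L h1 h2 h32 h0
    have hlogL1 : 1 ≤ Real.log L := (Real.le_log_iff_exp_le h0).mpr h2
    have hApow : Real.log L ^ A ≤ Real.log L ^ (n:ℝ) :=
      Real.rpow_le_rpow_of_exponent_le hlogL1 (Nat.le_ceil A)
    have hnat : Real.log L ^ (n:ℝ) = Real.log L ^ n := Real.rpow_natCast _ n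
    have hdiv : Real.log L ^ n < L/1024 := by
      rw [div_lt_iff₀ (by linarith : (0:ℝ) < 1*L+0)] at h1
      have : Real.log L ^ n < 1/1024 * (1*L+0) := h1
      linarith
    have hpow : Real.log L ^ A ≤ L/1024 := by
      rw [hnat] at hApow
      linarith
    have harg : L * Real.log L^A + 1 ≤ L*L/1024 + 1 := by
      have := mul_le_mul_of_nonneg_left hpow h0.le
      nlinarith
    have harg2 : L*L/1024 + 1 ≤ (L/16)^2 := by nlinarith
    have hs : Real.sqrt (L * Real.log L^A + 1) ≤ L/16 := by
      calc Real.sqrt (L * Real.log L^A + 1) ≤ Real.sqrt ((L/16)^2) :=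
            Real.sqrt_le_sqrt (by linarith)
        _ = L/16 := Real.sqrt_sq (by linarith)
    linarith
  filter_upwards [Filter.eventually_ge_atTop (3:ℝ), h2, h3] with T a b c
  exact ⟨a, b, c⟩


set_option maxHeartbeats 2000000 in
/-- For `A > 0`, uniformly for `T ≥ T₀(A)` and `e²·log T ≤ y ≤ (log T)(log₂T)^A`,
`∫_0^∞ Φ_T(u; y) du ≪_A 1`. -/
theorem first_moment_bounded (A : ℝ) (hA : 0 < A) :
    ∃ T0 C : ℝ, 0 < C ∧ ∀ T y : ℝ, T0 ≤ T →
      Real.exp 2 * Real.log T ≤ y → y ≤ Real.log T * Real.log (Real.log T) ^ A →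
      (∫ u in Set.Ioi (0 : ℝ), PhiY T u y) ≤ C := by
  obtain ⟨T0, hT0⟩ := Filter.eventually_atTop.mp (eventual A hA)
  refine ⟨T0, 6, by norm_num, ?_⟩
  intro T y hTT0 hy1 hy2
  obtain ⟨hT3, hT2, hT16⟩ := hT0 T hTT0
  have hTpos : (0:ℝ) < T := by linarith
  have hlog1 : 1 ≤ Real.log T := by
    rw [Real.le_log_iff_exp_le hTpos]
    linarith [Real.exp_one_lt_d9]
  have hy0 : 0 < y :=
    lt_of_lt_of_le (mul_pos (Real.exp_pos 2) (by linarith)) hy1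
  set K := ⌊y⌋₊ + 1 with hKdef
  set N := ⌈T⌉₊ with hNdef
  have hN1 : 1 ≤ N := Nat.one_le_iff_ne_zero.mpr (Nat.ceil_pos.mpr hTpos).ne'
  have hTN : T ≤ N := Nat.le_ceil T
  have hNpos : (0:ℝ) < N := lt_of_lt_of_le hTpos hTN
  have hN2T : (N:ℝ) ≤ 2*T := by
    have := Nat.ceil_lt_add_one hTpos.le
    have hT1 : (1:ℝ) ≤ T := by linarith
    linarith
  have hlogN : Real.log N ≤ Real.log 2 + Real.log T := by
    have h1 : Real.log N ≤ Real.log (2*T) := Real.log_le_log hNpos hN2T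
    rwa [Real.log_mul two_ne_zero (ne_of_gt hTpos)] at h1
  set F := (Finset.Icc 1 N).filter (· ∈ Nat.smoothNumbers K) with hFdef
  set g : ℝ → ℂ := fun t => ∑ n ∈ F, (n:ℂ)^(-(1+(t:ℂ)*Complex.I)) with hgdef
  have hgcont : Continuous g := by
    apply continuous_finset_sum
    intro n hn
    have hn1 : 1 ≤ n := (Finset.mem_Icc.mp (Finset.mem_filter.mp hn).1).1
    have hne : (n:ℂ) ≠ 0 := by
      simp only [ne_eq, Nat.cast_eq_zero]
      omega
    apply Continuous.const_cpow _ (Or.inl hne)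
    fun_prop
  have hR : Real.exp (8*Real.sqrt ((⌊y⌋₊:ℝ)+1)) / Real.sqrt N ≤ 1 := by
    have hKy : ((⌊y⌋₊:ℝ)+1) ≤ y + 1 := by
      have := Nat.floor_le hy0.le
      linarith
    have hs1 : Real.sqrt ((⌊y⌋₊:ℝ)+1)
        ≤ Real.sqrt (Real.log T * Real.log (Real.log T)^A + 1) :=
      Real.sqrt_le_sqrt (by linarith)
    have h8 : 8*Real.sqrt ((⌊y⌋₊:ℝ)+1) ≤ Real.log T / 2 := by linarith
    have hexp : Real.exp (8*Real.sqrt ((⌊y⌋₊:ℝ)+1)) ≤ Real.sqrt T := by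
      have h2 : (0:ℝ) ≤ Real.exp (Real.log T / 2) := (Real.exp_pos _).le
      have h1 : Real.exp (Real.log T / 2) ≤ Real.sqrt T := by
        have hsq : Real.exp (Real.log T/2)^2 = T := by
          rw [pow_two, ← Real.exp_add, show Real.log T/2 + Real.log T/2 = Real.log T by ring,
            Real.exp_log hTpos]
        nlinarith [Real.sq_sqrt hTpos.le, Real.sqrt_nonneg T, Real.sqrt_pos.mpr hTpos]
      exact (Real.exp_le_exp.mpr h8).trans h1
    have hsqN : Real.sqrt T ≤ Real.sqrt N := Real.sqrt_le_sqrt hTN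
    have hsqTpos : 0 < Real.sqrt T := Real.sqrt_pos.mpr hTpos
    rw [div_le_one (lt_of_lt_of_le hsqTpos hsqN)]
    exact hexp.trans hsqN
  have hZg : ∀ t : ℝ, ‖zetaY y (1 + (t:ℂ)*Complex.I)‖ ≤ ‖g t‖ + 1 := by
    intro t
    have h1 : ‖zetaY y (1+(t:ℂ)*Complex.I) - g t‖
        ≤ Real.exp (8*Real.sqrt ((⌊y⌋₊:ℝ)+1)) / Real.sqrt N := zetaY_tail y t N hN1
    have h2 : ‖zetaY y (1+(t:ℂ)*Complex.I)‖ ≤ ‖g t‖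
        + ‖zetaY y (1+(t:ℂ)*Complex.I) - g t‖ := by
      calc ‖zetaY y (1+(t:ℂ)*Complex.I)‖
          = ‖g t + (zetaY y (1+(t:ℂ)*Complex.I) - g t)‖ := by ring_nf
        _ ≤ _ := norm_add_le _ _
    linarith [h1, hR, h2]
  set φ : ℝ → ℝ := fun t => (‖g t‖ + 1)^2 with hφdef
  have hφc : Continuous φ :=
    ((continuous_norm.comp hgcont).add continuous_const).pow 2
  have hφ0 : ∀ x, 0 ≤ φ x := fun x => by positivity
  have hsm : ∫ t in T..(2*T), ‖g t‖^2 ≤ 2*T + 4*(1+Real.log N)^2 :=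
    second_moment T hTpos N F (Finset.filter_subset _ _)
  have habsint : IntervalIntegrable (fun t => ‖g t‖^2) volume T (2*T) :=
    (((continuous_norm.comp hgcont).pow 2)).intervalIntegrable _ _
  have hφint : ∫ t in T..(2*T), φ t ≤ 8*T := by
    have hmono : ∫ t in T..(2*T), φ t ≤ ∫ t in T..(2*T), (2*‖g t‖^2 + 2) := by
      apply intervalIntegral.integral_mono_on (by linarith) (hφc.intervalIntegrable _ _)
        (((habsint.const_mul 2).add (intervalIntegrable_const)))
      intro t _
      have h0 := norm_nonneg (g t)
      simp only [hφdef]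
      nlinarith [sq_nonneg (‖g t‖ - 1)]
    have hsplit : ∫ t in T..(2*T), (2*‖g t‖^2 + 2)
        = 2*(∫ t in T..(2*T), ‖g t‖^2) + (2*T - T)*2 := by
      rw [intervalIntegral.integral_add (habsint.const_mul 2) intervalIntegrable_const,
        intervalIntegral.integral_const_mul, intervalIntegral.integral_const, smul_eq_mul]
    have hlogNineq : 8*(1+Real.log N)^2 ≤ T/2 := by
      have hbnd : 1+Real.log N ≤ 1+Real.log 2+Real.log T := by linarith
      have hN1' : (1:ℝ) ≤ N := by exact_mod_cast hN1
      have hnn : 0 ≤ 1+Real.log N := by linarith [Real.log_nonneg hN1']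
      have : (1+Real.log N)^2 ≤ (1+Real.log 2+Real.log T)^2 := by nlinarith
      linarith
    linarith [hsm, hsplit, hmono]
  have hPhi1 : ∀ u : ℝ, PhiY T u y ≤ 1 := by
    intro u
    rw [PhiY]
    have hvol : volume {t : ℝ | t ∈ Set.Icc T (2*T) ∧
        Real.exp Real.eulerMascheroniConstant * u <
          ‖zetaY y (1 + t * Complex.I)‖} ≤ volume (Set.Icc T (2*T)) :=
      measure_mono (fun t ht => ht.1)
    rw [Real.volume_Icc] at hvol
    have htr : (volume {t : ℝ | t ∈ Set.Icc T (2*T) ∧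
        Real.exp Real.eulerMascheroniConstant * u <
          ‖zetaY y (1 + t * Complex.I)‖}).toReal ≤ 2*T - T := by
      have := ENNReal.toReal_mono (by simp) hvol
      rwa [ENNReal.toReal_ofReal (by linarith)] at this
    rw [div_le_one hTpos]
    linarith
  have hγ : (1:ℝ) ≤ Real.exp Real.eulerMascheroniConstant :=
    Real.one_le_exp (by linarith [Real.one_half_lt_eulerMascheroniConstant])
  have hPhi2 : ∀ u : ℝ, 0 < u → PhiY T u y ≤ 8/u^2 := by
    intro u hu
    set ε := (Real.exp Real.eulerMascheroniConstant * u)^2 with hεdef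
    have hεpos : 0 < ε := by positivity
    have hεu : u^2 ≤ ε := by
      rw [hεdef]
      have h' : u ≤ Real.exp Real.eulerMascheroniConstant * u := le_mul_of_one_le_left hu.le hγ
      exact pow_le_pow_left₀ hu.le h' 2
    have hmb := measure_bound hTpos hεpos hφc hφ0
      (S := {t : ℝ | t ∈ Set.Icc T (2*T) ∧
        Real.exp Real.eulerMascheroniConstant * u <
          ‖zetaY y (1 + t * Complex.I)‖}) ?_
    · rw [PhiY, div_le_div_iff₀ hTpos (by positivity : (0:ℝ) < u^2)]
      have hb1 : (volume {t : ℝ | t ∈ Set.Icc T (2*T) ∧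
          Real.exp Real.eulerMascheroniConstant * u <
            ‖zetaY y (1 + t * Complex.I)‖}).toReal
          ≤ (8*T)/ε := hmb.trans (by
            apply div_le_div_of_nonneg_right hφint hεpos.le)
      have hb2 : (8*T)/ε ≤ (8*T)/u^2 := by
        apply div_le_div_of_nonneg_left _ (by positivity) hεu
        positivity
      calc (volume _).toReal * u^2 ≤ ((8*T)/u^2) * u^2 := by
            apply mul_le_mul_of_nonneg_right (hb1.trans hb2) (by positivity)
        _ = 8*T := by field_simp
        _ = 8*T := by ring
    · intro t ht
      refine ⟨ht.1, ?_⟩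
      have h1 : Real.exp Real.eulerMascheroniConstant * u <
          ‖zetaY y (1 + t * Complex.I)‖ := ht.2
      have h2 := hZg t
      have h3 : 0 ≤ Real.exp Real.eulerMascheroniConstant * u := by positivity
      have h4 : 0 ≤ ‖g t‖ := norm_nonneg _
      simp only [hφdef]
      nlinarith
  have hPhinn : ∀ u : ℝ, 0 ≤ PhiY T u y := by
    intro u
    rw [PhiY]
    positivity
  calc ∫ u in Set.Ioi (0:ℝ), PhiY T u y ≤ ∫ u in Set.Ioi (0:ℝ), hdom u := by
        refine integral_mono_of_nonneg (ae_of_all _ hPhinn) hdom_int.1 ?_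
        filter_upwards [ae_restrict_mem measurableSet_Ioi] with u hu
        have hu0 : (0:ℝ) < u := hu
        have hh : hdom u = if u ≤ 3 then (1:ℝ) else 8/u^2 := rfl
        rw [hh]
        by_cases hu3 : u ≤ 3
        · rw [if_pos hu3]; exact hPhi1 u
        · rw [if_neg hu3]; exact hPhi2 u hu0
    _ ≤ 6 := hdom_int.2
end
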